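/- arXiv:2108.10040 — 9 statements merged into one kernel-verified Lean document; each statement's English description precedes it below -/
import Mathlib

section
/- Fix d, n ≥ 1 and a permutation π of Fin n. For arrays T : (Fin n → Fin d) → (Fin n → Fin d) → ℝ (the components T^{ξ₁…ξₙ}_{η₁…ηₙ} of an (n,n)-tensor, first argument the upper multi-index ξ, second the lower multi-index η) define the complete contraction S(T) = ∑_{ξ : Fin n → Fin d} T ξ (ξ ∘ π), i.e. the lower index string is the permutation π of the upper one. Then for every T and all μ, ν ∈ Fin d: ∑_{j ∈ Fin n} ∑_{ξ, η : Fin n → Fin d with ξ j = ν} (∂S/∂T_{(ξ,η)})(T) · T (Function.update ξ j μ) η = ∑_{k ∈ Fin n} ∑_{ξ, η : Fin n → Fin d with η k = μ} (∂S/∂T_{(ξ,η)})(T) · T ξ (Function.update η k ν). Equivalently, the combination in which, term by term, exactly one contracted upper index of S is replaced by ν in the derivative and by μ in the remaining tensor factor (with a minus sign), and exactly one contracted lower index is replaced by μ in the derivative and by ν in the tensor factor (with a plus sign), vanishes identically. -/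
private lemma tci_collapse {α : Type*} [Fintype α] [DecidableEq α] (Q : α → Prop)
    [DecidablePred Q] (f : α → ℝ) (a : α) :
    (∑ η : α, if Q η then (if η = a then f η else 0) else 0) = if Q a then f a else 0 := by
  rw [Finset.sum_eq_single a] <;> simp +contextual

private lemma tci_reindex (d n : ℕ) (π : Equiv.Perm (Fin n))
    (T : (Fin n → Fin d) → (Fin n → Fin d) → ℝ) (μ ν : Fin d) (j : Fin n) :
    (∑ ξ : Fin n → Fin d, if ξ j = ν then T (Function.update ξ j μ) (ξ ∘ π) else 0)
    = ∑ ξ : Fin n → Fin d,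
        if ξ j = μ then T ξ (Function.update (ξ ∘ π) (π⁻¹ j) ν) else 0 := by
  set g : (Fin n → Fin d) → (Fin n → Fin d) :=
    fun ξ => Function.update ξ j (Equiv.swap μ ν (ξ j)) with hg
  have hinv : Function.Involutive g := by
    intro ξ
    funext i
    by_cases h : i = j <;> simp [hg, Function.update, h]
  refine Fintype.sum_bijective g hinv.bijective _ _ fun ξ => ?_
  have hgj : g ξ j = Equiv.swap μ ν (ξ j) := by simp [hg]
  by_cases h : ξ j = ν
  · have h1 : g ξ j = μ := by simp [hgj, h]
    rw [if_pos h, if_pos h1]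
    congr 1
    · funext i
      by_cases hi : i = j <;> simp [hg, Function.update, hi, h]
    · funext i
      by_cases hi : π i = j
      · have hip : i = π⁻¹ j := by simp [← hi]
        rw [hip]
        simp [Function.comp_def, Equiv.apply_symm_apply, h]
      · have hip : i ≠ π⁻¹ j := fun hc => hi (by simp [hc])
        simp [hip, Function.comp, hg, Function.update, hi]
        exact fun hc => absurd hc hip
  · have h1 : g ξ j ≠ μ := by
      rw [hgj]
      intro hc
      exact h ((Equiv.injective _) (hc.trans (Equiv.swap_apply_right μ ν).symm))
    rw [if_neg h, if_neg h1]

/-- The main tensor identity for the complete contraction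
`S(T) = ∑ ξ, T ξ (ξ ∘ π)` of an `(n,n)`-tensor: term by term, replacing one
contracted upper index by `ν` in the derivative and by `μ` in the remaining
tensor factor equals replacing one contracted lower index by `μ` in the
derivative and by `ν` in the tensor factor. -/
theorem tensor_contraction_identity (d n : ℕ) (hd : 1 ≤ d) (hn : 1 ≤ n)
    (π : Equiv.Perm (Fin n))
    (S : ((Fin n → Fin d) → (Fin n → Fin d) → ℝ) → ℝ)
    (hS : S = fun T => ∑ ξ : Fin n → Fin d, T ξ (ξ ∘ π)) :
    ∀ (T : (Fin n → Fin d) → (Fin n → Fin d) → ℝ) (μ ν : Fin d),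
      (∑ j : Fin n, ∑ ξ : Fin n → Fin d, ∑ η : Fin n → Fin d,
        if ξ j = ν then
          fderiv ℝ S T (fun ξ' η' => if ξ' = ξ ∧ η' = η then 1 else 0)
            * T (Function.update ξ j μ) η
        else 0)
      = ∑ k : Fin n, ∑ ξ : Fin n → Fin d, ∑ η : Fin n → Fin d,
        if η k = μ then
          fderiv ℝ S T (fun ξ' η' => if ξ' = ξ ∧ η' = η then 1 else 0)
            * T ξ (Function.update η k ν)
        else 0 := by
  intro T μ ν
  have key : ∀ ξ₀ η₀ : Fin n → Fin d,
      fderiv ℝ S T (fun ξ' η' => if ξ' = ξ₀ ∧ η' = η₀ then 1 else 0)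
        = if η₀ = ξ₀ ∘ π then 1 else 0 := by
    intro ξ₀ η₀
    have hder : HasFDerivAt S
        (∑ ξ : Fin n → Fin d,
          (ContinuousLinearMap.proj (R := ℝ) (φ := fun _ : (Fin n → Fin d) => ℝ) (ξ ∘ π)).comp
            (ContinuousLinearMap.proj (R := ℝ)
              (φ := fun _ : (Fin n → Fin d) => (Fin n → Fin d) → ℝ) ξ)) T := by
      rw [hS]
      apply HasFDerivAt.fun_sum
      intro ξ _
      exact ((ContinuousLinearMap.proj (R := ℝ) (φ := fun _ : (Fin n → Fin d) => ℝ) (ξ ∘ π)).comp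
        (ContinuousLinearMap.proj (R := ℝ)
          (φ := fun _ : (Fin n → Fin d) => (Fin n → Fin d) → ℝ) ξ)).hasFDerivAt
    rw [hder.fderiv]
    simp only [ContinuousLinearMap.sum_apply, ContinuousLinearMap.comp_apply,
      ContinuousLinearMap.proj_apply, ite_and]
    rw [Finset.sum_ite_eq' Finset.univ ξ₀]
    simp [eq_comm]
  calc (∑ j : Fin n, ∑ ξ : Fin n → Fin d, ∑ η : Fin n → Fin d,
        if ξ j = ν then
          fderiv ℝ S T (fun ξ' η' => if ξ' = ξ ∧ η' = η then 1 else 0)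
            * T (Function.update ξ j μ) η
        else 0)
      = ∑ j : Fin n, ∑ ξ : Fin n → Fin d,
          if ξ j = ν then T (Function.update ξ j μ) (ξ ∘ π) else 0 := by
        refine Finset.sum_congr rfl fun j _ => Finset.sum_congr rfl fun ξ _ => ?_
        simp only [key, ite_mul, one_mul, zero_mul]
        rw [show (∑ η : Fin n → Fin d,
            if ξ j = ν then (if η = ξ ∘ π then T (Function.update ξ j μ) η else 0) else 0)
          = ∑ η : Fin n → Fin d,
            if (fun _ : Fin n → Fin d => ξ j = ν) η then
              (if η = ξ ∘ π then T (Function.update ξ j μ) η else 0) else 0 from rfl,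
          tci_collapse]
    _ = ∑ j : Fin n, ∑ ξ : Fin n → Fin d,
          if ξ j = μ then T ξ (Function.update (ξ ∘ π) (π⁻¹ j) ν) else 0 := by
        exact Finset.sum_congr rfl fun j _ => tci_reindex d n π T μ ν j
    _ = ∑ k : Fin n, ∑ ξ : Fin n → Fin d,
          if (ξ ∘ π) k = μ then T ξ (Function.update (ξ ∘ π) k ν) else 0 := by
        rw [← Equiv.sum_comp π.symm
          (fun k => ∑ ξ : Fin n → Fin d,
            if (ξ ∘ π) k = μ then T ξ (Function.update (ξ ∘ π) k ν) else 0)]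
        refine Finset.sum_congr rfl fun j _ => Finset.sum_congr rfl fun ξ _ => ?_
        have : (ξ ∘ π) (π.symm j) = ξ j := by simp
        rw [this]
        rfl
    _ = ∑ k : Fin n, ∑ ξ : Fin n → Fin d, ∑ η : Fin n → Fin d,
        if η k = μ then
          fderiv ℝ S T (fun ξ' η' => if ξ' = ξ ∧ η' = η then 1 else 0)
            * T ξ (Function.update η k ν)
        else 0 := by
        refine Finset.sum_congr rfl fun k _ => Finset.sum_congr rfl fun ξ _ => ?_
        simp only [key, ite_mul, one_mul, zero_mul]
        rw [show (∑ η : Fin n → Fin d,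
            if η k = μ then (if η = ξ ∘ π then T ξ (Function.update η k ν) else 0) else 0)
          = ∑ η : Fin n → Fin d,
            if (fun η : Fin n → Fin d => η k = μ) η then
              (if η = ξ ∘ π then T ξ (Function.update η k ν) else 0) else 0 from rfl,
          tci_collapse]
end

section
/- Let d, n, m ≥ 1 and let S : Matrix (Fin d) (Fin d) ℝ × ((Fin n → Fin d) → (Fin m → Fin d) → ℝ) → ℝ be differentiable at a point (g, T). Assume that for all μ, ν ∈ Fin d the identity ∑_{β} (∂S/∂g_{(μ,β)}) · g ν β + ∑_{β} (∂S/∂g_{(β,μ)}) · g β ν − ∑_{j ∈ Fin n} ∑_{ξ, η with ξ j = ν} (∂S/∂T_{(ξ,η)}) · T (Function.update ξ j μ) η + ∑_{k ∈ Fin m} ∑_{ξ, η with η k = μ} (∂S/∂T_{(ξ,η)}) · T ξ (Function.update η k ν) = 0 holds at (g, T), where all partial derivatives are taken at (g, T). Then 2 · ∑_{α,β} (∂S/∂g_{(α,β)}) · g α β = (n − m) · ∑_{ξ,η} (∂S/∂T_{(ξ,η)}) · T ξ η. -/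
attribute [local instance] Matrix.normedAddCommGroup Matrix.normedSpace

/-- the trace (Eq. (5)) of the tensor identity (Eq. (4)) for a scalar
built from the metric `g` and an `(n,m)`-tensor `T`. -/
theorem trace_of_tensor_identity (d n m : ℕ) (hd : 1 ≤ d) (hn : 1 ≤ n) (hm : 1 ≤ m)
    (S : Matrix (Fin d) (Fin d) ℝ × ((Fin n → Fin d) → (Fin m → Fin d) → ℝ) → ℝ)
    (g : Matrix (Fin d) (Fin d) ℝ) (T : (Fin n → Fin d) → (Fin m → Fin d) → ℝ)
    (hdiff : DifferentiableAt ℝ S (g, T))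
    (hid : ∀ μ ν : Fin d,
      (∑ β, fderiv ℝ S (g, T) (Matrix.single μ β 1, 0) * g ν β)
      + (∑ β, fderiv ℝ S (g, T) (Matrix.single β μ 1, 0) * g β ν)
      - (∑ j : Fin n, ∑ ξ : Fin n → Fin d, ∑ η : Fin m → Fin d,
          if ξ j = ν then
            fderiv ℝ S (g, T) (0, fun ξ' η' => if ξ' = ξ ∧ η' = η then 1 else 0)
              * T (Function.update ξ j μ) η
          else 0)
      + (∑ k : Fin m, ∑ ξ : Fin n → Fin d, ∑ η : Fin m → Fin d,
          if η k = μ then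
            fderiv ℝ S (g, T) (0, fun ξ' η' => if ξ' = ξ ∧ η' = η then 1 else 0)
              * T ξ (Function.update η k ν)
          else 0) = 0) :
    2 * ∑ α, ∑ β, fderiv ℝ S (g, T) (Matrix.single α β 1, 0) * g α β
      = ((n : ℝ) - (m : ℝ)) * ∑ ξ : Fin n → Fin d, ∑ η : Fin m → Fin d,
          fderiv ℝ S (g, T) (0, fun ξ' η' => if ξ' = ξ ∧ η' = η then 1 else 0) * T ξ η := by
  classical
  set A : ℝ := ∑ α, ∑ β, fderiv ℝ S (g, T) (Matrix.single α β 1, 0) * g α β with hA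
  set B : ℝ := ∑ ξ : Fin n → Fin d, ∑ η : Fin m → Fin d,
      fderiv ℝ S (g, T) (0, fun ξ' η' => if ξ' = ξ ∧ η' = η then 1 else 0) * T ξ η with hB
  have H : (∑ μ : Fin d, ∑ β, fderiv ℝ S (g, T) (Matrix.single μ β 1, 0) * g μ β)
      + (∑ μ : Fin d, ∑ β, fderiv ℝ S (g, T) (Matrix.single β μ 1, 0) * g β μ)
      - (∑ μ : Fin d, ∑ j : Fin n, ∑ ξ : Fin n → Fin d, ∑ η : Fin m → Fin d,
          if ξ j = μ then
            fderiv ℝ S (g, T) (0, fun ξ' η' => if ξ' = ξ ∧ η' = η then 1 else 0)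
              * T (Function.update ξ j μ) η
          else 0)
      + (∑ μ : Fin d, ∑ k : Fin m, ∑ ξ : Fin n → Fin d, ∑ η : Fin m → Fin d,
          if η k = μ then
            fderiv ℝ S (g, T) (0, fun ξ' η' => if ξ' = ξ ∧ η' = η then 1 else 0)
              * T ξ (Function.update η k μ)
          else 0) = 0 := by
    rw [← Finset.sum_add_distrib, ← Finset.sum_sub_distrib, ← Finset.sum_add_distrib]
    exact Finset.sum_eq_zero fun μ _ => hid μ μ
  have h1 : (∑ μ : Fin d, ∑ β, fderiv ℝ S (g, T) (Matrix.single μ β 1, 0) * g μ β)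
      = A := rfl
  have h2 : (∑ μ : Fin d, ∑ β, fderiv ℝ S (g, T) (Matrix.single β μ 1, 0) * g β μ)
      = A := Finset.sum_comm
  have h3 : (∑ μ : Fin d, ∑ j : Fin n, ∑ ξ : Fin n → Fin d, ∑ η : Fin m → Fin d,
          if ξ j = μ then
            fderiv ℝ S (g, T) (0, fun ξ' η' => if ξ' = ξ ∧ η' = η then 1 else 0)
              * T (Function.update ξ j μ) η
          else 0) = (n : ℝ) * B := by
    rw [Finset.sum_comm]
    have : ∀ j : Fin n, (∑ μ : Fin d, ∑ ξ : Fin n → Fin d, ∑ η : Fin m → Fin d,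
          if ξ j = μ then
            fderiv ℝ S (g, T) (0, fun ξ' η' => if ξ' = ξ ∧ η' = η then 1 else 0)
              * T (Function.update ξ j μ) η
          else 0) = B := by
      intro j
      rw [Finset.sum_comm]
      refine Finset.sum_congr rfl fun ξ _ => ?_
      rw [Finset.sum_comm]
      refine Finset.sum_congr rfl fun η _ => ?_
      rw [Finset.sum_ite_eq Finset.univ (ξ j)
        (fun μ => fderiv ℝ S (g, T) (0, fun ξ' η' => if ξ' = ξ ∧ η' = η then 1 else 0)
              * T (Function.update ξ j μ) η)]
      simp [Function.update_eq_self]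
    simp only [this, Finset.sum_const, Finset.card_univ, Fintype.card_fin, nsmul_eq_mul]
  have h4 : (∑ μ : Fin d, ∑ k : Fin m, ∑ ξ : Fin n → Fin d, ∑ η : Fin m → Fin d,
          if η k = μ then
            fderiv ℝ S (g, T) (0, fun ξ' η' => if ξ' = ξ ∧ η' = η then 1 else 0)
              * T ξ (Function.update η k μ)
          else 0) = (m : ℝ) * B := by
    rw [Finset.sum_comm]
    have : ∀ k : Fin m, (∑ μ : Fin d, ∑ ξ : Fin n → Fin d, ∑ η : Fin m → Fin d,
          if η k = μ then
            fderiv ℝ S (g, T) (0, fun ξ' η' => if ξ' = ξ ∧ η' = η then 1 else 0)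
              * T ξ (Function.update η k μ)
          else 0) = B := by
      intro k
      rw [Finset.sum_comm]
      refine Finset.sum_congr rfl fun ξ _ => ?_
      rw [Finset.sum_comm]
      refine Finset.sum_congr rfl fun η _ => ?_
      rw [Finset.sum_ite_eq Finset.univ (η k)
        (fun μ => fderiv ℝ S (g, T) (0, fun ξ' η' => if ξ' = ξ ∧ η' = η then 1 else 0)
              * T ξ (Function.update η k μ))]
      simp [Function.update_eq_self]
    simp only [this, Finset.sum_const, Finset.card_univ, Fintype.card_fin, nsmul_eq_mul]
  rw [h1, h2, h3, h4] at H
  linarith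
end

section
/- Let d, n, m ≥ 1, w : ℕ, and let S : Matrix (Fin d) (Fin d) ℝ × ((Fin n → Fin d) → (Fin m → Fin d) → ℝ) → ℝ be differentiable at a point (g, T) with det g < 0. Assume that for all μ, ν ∈ Fin d the identity ∑_{β} (∂S/∂g_{(μ,β)}) · g ν β + ∑_{β} (∂S/∂g_{(β,μ)}) · g β ν − ∑_{j ∈ Fin n} ∑_{ξ, η with ξ j = ν} (∂S/∂T_{(ξ,η)}) · T (Function.update ξ j μ) η + ∑_{k ∈ Fin m} ∑_{ξ, η with η k = μ} (∂S/∂T_{(ξ,η)}) · T ξ (Function.update η k ν) = 0 holds at (g, T). Define the relative scalar of weight w by S̃(g', T') = S(g', T') · (Real.sqrt (−det g'))^w. Then S̃ is differentiable at (g, T) and for all μ, ν ∈ Fin d: ∑_{β} (∂S̃/∂g_{(μ,β)}) · g ν β + ∑_{β} (∂S̃/∂g_{(β,μ)}) · g β ν − ∑_{j} ∑_{ξ, η, ξ j = ν} (∂S̃/∂T_{(ξ,η)}) · T (Function.update ξ j μ) η + ∑_{k} ∑_{ξ, η, η k = μ} (∂S̃/∂T_{(ξ,η)}) · T ξ (Function.update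 η k ν) = w · (if μ = ν then 1 else 0) · S̃(g, T). -/
attribute [local instance] Matrix.normedAddCommGroup Matrix.normedSpace

noncomputable def detCMM (d : ℕ) : ContinuousMultilinearMap ℝ (fun _ : Fin d => (Fin d → ℝ)) ℝ :=
  MultilinearMap.mkContinuous
    (Matrix.detRowAlternating : AlternatingMap ℝ (Fin d → ℝ) ℝ (Fin d)).toMultilinearMap
    (Nat.factorial d) (fun M => by
      show ‖Matrix.det (Matrix.of M)‖ ≤ _
      rw [Matrix.det_apply]
      calc ‖∑ σ : Equiv.Perm (Fin d), Equiv.Perm.sign σ • ∏ i, Matrix.of M (σ i) i‖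
          ≤ ∑ σ : Equiv.Perm (Fin d), ‖Equiv.Perm.sign σ • ∏ i, Matrix.of M (σ i) i‖ :=
            norm_sum_le _ _
        _ ≤ ∑ σ : Equiv.Perm (Fin d), ∏ i, ‖M i‖ := by
            refine Finset.sum_le_sum fun σ _ => ?_
            have h1 : ‖Equiv.Perm.sign σ • ∏ i, Matrix.of M (σ i) i‖
                = ‖∏ i, M (σ i) i‖ := by
              rcases Int.units_eq_one_or (Equiv.Perm.sign σ) with h | h <;>
                simp [h, Units.smul_def, Matrix.of_apply]
            rw [h1]
            calc ‖∏ i, M (σ i) i‖ ≤ ∏ i, ‖M (σ i) i‖ := by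
                  rw [Real.norm_eq_abs, Finset.abs_prod]
                  exact le_of_eq (Finset.prod_congr rfl fun i _ => rfl)
              _ ≤ ∏ i, ‖M (σ i)‖ := by
                  exact Finset.prod_le_prod (fun i _ => norm_nonneg _)
                    (fun i _ => norm_le_pi_norm (M (σ i)) i)
              _ = ∏ i, ‖M i‖ := Equiv.prod_comp σ (fun i => ‖M i‖)
        _ = (Nat.factorial d) * ∏ i, ‖M i‖ := by
            rw [Finset.sum_const, Finset.card_univ, Fintype.card_perm, Fintype.card_fin,
              nsmul_eq_mul]
      )

theorem detCMM_coe (d : ℕ) : ⇑(detCMM d) = (Matrix.det : Matrix (Fin d) (Fin d) ℝ → ℝ) := funext fun M => rfl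

theorem det_hasFDerivAt (d : ℕ) (g : Matrix (Fin d) (Fin d) ℝ) :
    HasFDerivAt (Matrix.det : Matrix (Fin d) (Fin d) ℝ → ℝ) ((detCMM d).linearDeriv g) g := by
  have := (detCMM d).hasFDerivAt g
  rwa [detCMM_coe] at this

theorem linearDeriv_std (d : ℕ) (g : Matrix (Fin d) (Fin d) ℝ) (μ β : Fin d) :
    (detCMM d).linearDeriv g (Matrix.single μ β 1) = g.adjugate β μ := by
  erw [ContinuousMultilinearMap.linearDeriv_apply]
  have key : ∀ i : Fin d, (detCMM d) (Function.update g i (Matrix.single μ β 1 i))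
      = if i = μ then g.adjugate β μ else 0 := by
    intro i
    by_cases h : i = μ
    · subst h
      have hrow : Matrix.single i β (1:ℝ) i = Pi.single β 1 := by
        ext j
        simp [Matrix.single, Pi.single_apply, eq_comm]
      rw [if_pos rfl, hrow]
      show Matrix.det (Matrix.of (Function.update g i (Pi.single β 1))) = _
      rw [Matrix.adjugate_apply]
      rfl
    · have hrow : Matrix.single μ β (1:ℝ) i = 0 := by
        ext j
        simp [Matrix.single, Ne.symm h, h]
      rw [if_neg h, hrow]
      show Matrix.det (Matrix.of (Function.update g i 0)) = 0
      apply Matrix.det_eq_zero_of_row_eq_zero i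
      intro j
      show Function.update g i 0 i j = 0
      exact congrFun (Function.update_self i (0 : Fin d → ℝ) g) j
  simp only [key]
  simp

/-- the tensor identity (Eq. (4)) for an absolute scalar `S` extends to the
relative scalar `S̃ = S · (√(-det g))^w` of weight `w`, with the extra term
`w · δ^μ_ν · S̃` on the right-hand side (Eq. (6)). -/
theorem relative_scalar_tensor_identity (d n m : ℕ) (hd : 1 ≤ d) (hn : 1 ≤ n) (hm : 1 ≤ m)
    (w : ℕ)
    (S : Matrix (Fin d) (Fin d) ℝ × ((Fin n → Fin d) → (Fin m → Fin d) → ℝ) → ℝ)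
    (g : Matrix (Fin d) (Fin d) ℝ) (T : (Fin n → Fin d) → (Fin m → Fin d) → ℝ)
    (hdet : g.det < 0)
    (hdiff : DifferentiableAt ℝ S (g, T))
    (hid : ∀ μ ν : Fin d,
      (∑ β, fderiv ℝ S (g, T) (Matrix.single μ β 1, 0) * g ν β)
      + (∑ β, fderiv ℝ S (g, T) (Matrix.single β μ 1, 0) * g β ν)
      - (∑ j : Fin n, ∑ ξ : Fin n → Fin d, ∑ η : Fin m → Fin d,
          if ξ j = ν then
            fderiv ℝ S (g, T) (0, fun ξ' η' => if ξ' = ξ ∧ η' = η then 1 else 0)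
              * T (Function.update ξ j μ) η
          else 0)
      + (∑ k : Fin m, ∑ ξ : Fin n → Fin d, ∑ η : Fin m → Fin d,
          if η k = μ then
            fderiv ℝ S (g, T) (0, fun ξ' η' => if ξ' = ξ ∧ η' = η then 1 else 0)
              * T ξ (Function.update η k ν)
          else 0) = 0) :
    DifferentiableAt ℝ
      (fun p : Matrix (Fin d) (Fin d) ℝ × ((Fin n → Fin d) → (Fin m → Fin d) → ℝ) =>
        S p * (Real.sqrt (-p.1.det)) ^ w) (g, T) ∧
    ∀ μ ν : Fin d,
      (∑ β, fderiv ℝ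
          (fun p : Matrix (Fin d) (Fin d) ℝ × ((Fin n → Fin d) → (Fin m → Fin d) → ℝ) =>
            S p * (Real.sqrt (-p.1.det)) ^ w) (g, T)
          (Matrix.single μ β 1, 0) * g ν β)
      + (∑ β, fderiv ℝ
          (fun p : Matrix (Fin d) (Fin d) ℝ × ((Fin n → Fin d) → (Fin m → Fin d) → ℝ) =>
            S p * (Real.sqrt (-p.1.det)) ^ w) (g, T)
          (Matrix.single β μ 1, 0) * g β ν)
      - (∑ j : Fin n, ∑ ξ : Fin n → Fin d, ∑ η : Fin m → Fin d,
          if ξ j = ν then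
            fderiv ℝ
              (fun p : Matrix (Fin d) (Fin d) ℝ × ((Fin n → Fin d) → (Fin m → Fin d) → ℝ) =>
                S p * (Real.sqrt (-p.1.det)) ^ w) (g, T)
              (0, fun ξ' η' => if ξ' = ξ ∧ η' = η then 1 else 0)
              * T (Function.update ξ j μ) η
          else 0)
      + (∑ k : Fin m, ∑ ξ : Fin n → Fin d, ∑ η : Fin m → Fin d,
          if η k = μ then
            fderiv ℝ
              (fun p : Matrix (Fin d) (Fin d) ℝ × ((Fin n → Fin d) → (Fin m → Fin d) → ℝ) =>
                S p * (Real.sqrt (-p.1.det)) ^ w) (g, T)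
              (0, fun ξ' η' => if ξ' = ξ ∧ η' = η then 1 else 0)
              * T ξ (Function.update η k ν)
          else 0)
      = (w : ℝ) * (if μ = ν then 1 else 0) * (S (g, T) * (Real.sqrt (-g.det)) ^ w) := by

  have hS := hdiff.hasFDerivAt
  have ht0 : (0:ℝ) < -g.det := by linarith
  set s := Real.sqrt (-g.det) with hs
  have hspos : 0 < s := Real.sqrt_pos.mpr ht0
  have hs2 : s ^ 2 = -g.det := Real.sq_sqrt ht0.le
  have h1 : HasDerivAt (fun t : ℝ => -t) (-1) g.det := (hasDerivAt_id g.det).neg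
  have h2 : HasDerivAt (fun t : ℝ => Real.sqrt (-t)) (1/(2*s) * (-1)) g.det :=
    (Real.hasDerivAt_sqrt (ne_of_gt ht0)).comp g.det h1
  have h3 : HasDerivAt (fun t : ℝ => Real.sqrt (-t) ^ w)
      ((w : ℝ) * s ^ (w-1) * (1/(2*s) * (-1))) g.det := h2.pow w
  set c := (w : ℝ) * s ^ (w-1) * (1/(2*s) * (-1)) with hc
  have hkey : c * g.det = (w:ℝ)/2 * s ^ w := by
    cases w with
    | zero => simp [hc]
    | succ k =>
      have ht0' : g.det = -(s^2) := by rw [hs2]; ring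
      rw [hc, ht0']
      have hpow : s ^ (k+1-1) = s ^ k := rfl
      rw [hpow]
      field_simp
      ring
  have hdetD := det_hasFDerivAt d g
  have hf : HasFDerivAt (fun A : Matrix (Fin d) (Fin d) ℝ => Real.sqrt (-A.det) ^ w)
      (c • (detCMM d).linearDeriv g) g := h3.comp_hasFDerivAt g hdetD
  have hF : HasFDerivAt
      (fun p : Matrix (Fin d) (Fin d) ℝ × ((Fin n → Fin d) → (Fin m → Fin d) → ℝ) =>
        Real.sqrt (-p.1.det) ^ w)
      ((c • (detCMM d).linearDeriv g).comp (ContinuousLinearMap.fst ℝ (Fin d → Fin d → ℝ) ((Fin n → Fin d) → (Fin m → Fin d) → ℝ))) (g, T) := by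
    have h5 := hasFDerivAt_fst (𝕜 := ℝ) (E := Fin d → Fin d → ℝ) (F := (Fin n → Fin d) → (Fin m → Fin d) → ℝ) (p := (g, T))
    exact hf.comp (g, T) h5
  have hprod := hS.mul hF
  refine ⟨hprod.differentiableAt, ?_⟩
  intro μ ν
  have happ : ∀ v : Matrix (Fin d) (Fin d) ℝ × ((Fin n → Fin d) → (Fin m → Fin d) → ℝ),
      fderiv ℝ
        (fun p : Matrix (Fin d) (Fin d) ℝ × ((Fin n → Fin d) → (Fin m → Fin d) → ℝ) =>
          S p * (Real.sqrt (-p.1.det)) ^ w) (g, T) v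
      = S (g, T) * (c * ((detCMM d).linearDeriv g) v.1)
        + s ^ w * fderiv ℝ S (g, T) v := by
    intro v
    rw [(show HasFDerivAt (fun p : Matrix (Fin d) (Fin d) ℝ × ((Fin n → Fin d) → (Fin m → Fin d) → ℝ) => S p * (Real.sqrt (-p.1.det)) ^ w) _ (g, T) from hprod).fderiv]
    rfl
  simp only [happ]
  simp only [linearDeriv_std, map_zero, mul_zero, zero_add, add_zero]
  have hz : ((detCMM d).linearDeriv g) (0 : Matrix (Fin d) (Fin d) ℝ) = 0 := map_zero _
  simp only [hz, mul_zero, zero_add]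
  have e1 : (∑ x : Fin d,
      (S (g, T) * (c * g.adjugate x μ) + s ^ w * fderiv ℝ S (g, T) (Matrix.single μ x 1, 0)) * g ν x)
      = S (g, T) * c * (∑ x : Fin d, g.adjugate x μ * g ν x)
        + s ^ w * ∑ x : Fin d, fderiv ℝ S (g, T) (Matrix.single μ x 1, 0) * g ν x := by
    rw [Finset.mul_sum, Finset.mul_sum, ← Finset.sum_add_distrib]
    exact Finset.sum_congr rfl fun x _ => by ring
  have e2 : (∑ x : Fin d,
      (S (g, T) * (c * g.adjugate μ x) + s ^ w * fderiv ℝ S (g, T) (Matrix.single x μ 1, 0)) * g x ν)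
      = S (g, T) * c * (∑ x : Fin d, g.adjugate μ x * g x ν)
        + s ^ w * ∑ x : Fin d, fderiv ℝ S (g, T) (Matrix.single x μ 1, 0) * g x ν := by
    rw [Finset.mul_sum, Finset.mul_sum, ← Finset.sum_add_distrib]
    exact Finset.sum_congr rfl fun x _ => by ring
  have e3 : (∑ j : Fin n, ∑ ξ : Fin n → Fin d, ∑ η : Fin m → Fin d,
        if ξ j = ν then
          s ^ w * fderiv ℝ S (g, T) (0, fun ξ' η' => if ξ' = ξ ∧ η' = η then 1 else 0)
            * T (Function.update ξ j μ) η
        else 0)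
      = s ^ w * ∑ j : Fin n, ∑ ξ : Fin n → Fin d, ∑ η : Fin m → Fin d,
        if ξ j = ν then
          fderiv ℝ S (g, T) (0, fun ξ' η' => if ξ' = ξ ∧ η' = η then 1 else 0)
            * T (Function.update ξ j μ) η
        else 0 := by
    rw [Finset.mul_sum]
    refine Finset.sum_congr rfl fun j _ => ?_
    rw [Finset.mul_sum]
    refine Finset.sum_congr rfl fun ξ _ => ?_
    rw [Finset.mul_sum]
    refine Finset.sum_congr rfl fun η _ => ?_
    split <;> ring
  have e4 : (∑ k : Fin m, ∑ ξ : Fin n → Fin d, ∑ η : Fin m → Fin d,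
        if η k = μ then
          s ^ w * fderiv ℝ S (g, T) (0, fun ξ' η' => if ξ' = ξ ∧ η' = η then 1 else 0)
            * T ξ (Function.update η k ν)
        else 0)
      = s ^ w * ∑ k : Fin m, ∑ ξ : Fin n → Fin d, ∑ η : Fin m → Fin d,
        if η k = μ then
          fderiv ℝ S (g, T) (0, fun ξ' η' => if ξ' = ξ ∧ η' = η then 1 else 0)
            * T ξ (Function.update η k ν)
        else 0 := by
    rw [Finset.mul_sum]
    refine Finset.sum_congr rfl fun k _ => ?_
    rw [Finset.mul_sum]
    refine Finset.sum_congr rfl fun ξ _ => ?_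
    rw [Finset.mul_sum]
    refine Finset.sum_congr rfl fun η _ => ?_
    split <;> ring
  have hA1 : (∑ x : Fin d, g.adjugate x μ * g ν x) = g.det * (if μ = ν then 1 else 0) := by
    have h := congrFun (congrFun (Matrix.mul_adjugate g) ν) μ
    rw [Matrix.mul_apply] at h
    simp only [Matrix.smul_apply, Matrix.one_apply, smul_eq_mul] at h
    rw [Finset.sum_congr rfl (fun x _ => mul_comm (g.adjugate x μ) (g ν x)), h]
    by_cases hh : μ = ν
    · simp [hh]
    · simp [hh, Ne.symm hh]
  have hA2 : (∑ x : Fin d, g.adjugate μ x * g x ν) = g.det * (if μ = ν then 1 else 0) := by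
    have h := congrFun (congrFun (Matrix.adjugate_mul g) μ) ν
    rw [Matrix.mul_apply] at h
    simp only [Matrix.smul_apply, Matrix.one_apply, smul_eq_mul] at h
    exact h
  rw [e1, e2, e3, e4, hA1, hA2]
  have hid' := hid μ ν
  linear_combination s ^ w * hid' + 2 * S (g, T) * (if μ = ν then (1:ℝ) else 0) * hkey
end

section
/- Let d ≥ 1, let A, B : Fin d → Fin d → Fin d → ℝ and C : Fin d → ℝ, and define S(A, B, C) = ∑_{α,β,ξ,η} A α β ξ · B α ξ η · C β · C η (the complete contraction S = A^{αβ}_ξ B_α^{ξη} C_β C_η). Then for all μ, ν ∈ Fin d: −∑_{β,ξ} (∂S/∂A_{(ν,β,ξ)}) · A μ β ξ − ∑_{α,ξ} (∂S/∂A_{(α,ν,ξ)}) · A α μ ξ + ∑_{α,β} (∂S/∂A_{(α,β,μ)}) · A α β ν − ∑_{α,η} (∂S/∂B_{(α,ν,η)}) · B α μ η − ∑_{α,ξ} (∂S/∂B_{(α,ξ,ν)}) · B α ξ μ + ∑_{ξ,η} (∂S/∂B_{(μ,ξ,η)}) · B ν ξ η + (∂S/∂C_μ) · C ν = 0, where all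 partial derivatives are taken at (A, B, C). -/
abbrev TIE.E (d : ℕ) := (Fin d → Fin d → Fin d → ℝ) × (Fin d → Fin d → Fin d → ℝ) × (Fin d → ℝ)

noncomputable def TIE.pA (d : ℕ) (α β ξ : Fin d) : TIE.E d →L[ℝ] ℝ :=
  (ContinuousLinearMap.proj ξ : (Fin d → ℝ) →L[ℝ] ℝ).comp
    (((ContinuousLinearMap.proj β : (Fin d → Fin d → ℝ) →L[ℝ] (Fin d → ℝ))).comp
      (((ContinuousLinearMap.proj α :
          (Fin d → Fin d → Fin d → ℝ) →L[ℝ] (Fin d → Fin d → ℝ))).comp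
        (ContinuousLinearMap.fst ℝ (Fin d → Fin d → Fin d → ℝ)
          ((Fin d → Fin d → Fin d → ℝ) × (Fin d → ℝ)))))

noncomputable def TIE.pB (d : ℕ) (α ξ η : Fin d) : TIE.E d →L[ℝ] ℝ :=
  (ContinuousLinearMap.proj η : (Fin d → ℝ) →L[ℝ] ℝ).comp
    (((ContinuousLinearMap.proj ξ : (Fin d → Fin d → ℝ) →L[ℝ] (Fin d → ℝ))).comp
      (((ContinuousLinearMap.proj α :
          (Fin d → Fin d → Fin d → ℝ) →L[ℝ] (Fin d → Fin d → ℝ))).comp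
        ((ContinuousLinearMap.fst ℝ (Fin d → Fin d → Fin d → ℝ) (Fin d → ℝ)).comp
          (ContinuousLinearMap.snd ℝ (Fin d → Fin d → Fin d → ℝ)
            ((Fin d → Fin d → Fin d → ℝ) × (Fin d → ℝ))))))

noncomputable def TIE.pC (d : ℕ) (β : Fin d) : TIE.E d →L[ℝ] ℝ :=
  (ContinuousLinearMap.proj β : (Fin d → ℝ) →L[ℝ] ℝ).comp
    ((ContinuousLinearMap.snd ℝ (Fin d → Fin d → Fin d → ℝ) (Fin d → ℝ)).comp
      (ContinuousLinearMap.snd ℝ (Fin d → Fin d → Fin d → ℝ)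
        ((Fin d → Fin d → Fin d → ℝ) × (Fin d → ℝ))))

@[simp] lemma TIE.pA_apply (d : ℕ) (α β ξ : Fin d) (x : TIE.E d) :
    TIE.pA d α β ξ x = x.1 α β ξ := rfl
@[simp] lemma TIE.pB_apply (d : ℕ) (α ξ η : Fin d) (x : TIE.E d) :
    TIE.pB d α ξ η x = x.2.1 α ξ η := rfl
@[simp] lemma TIE.pC_apply (d : ℕ) (β : Fin d) (x : TIE.E d) :
    TIE.pC d β x = x.2.2 β := rfl

lemma TIE.fderiv_S_apply (d : ℕ)
    (A B : Fin d → Fin d → Fin d → ℝ) (C : Fin d → ℝ) (v : TIE.E d) :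
    fderiv ℝ
      (fun x : TIE.E d =>
        ∑ α, ∑ β, ∑ ξ, ∑ η, x.1 α β ξ * x.2.1 α ξ η * x.2.2 β * x.2.2 η) (A, B, C) v
    = ∑ α, ∑ β, ∑ ξ, ∑ η,
        (v.1 α β ξ * B α ξ η * C β * C η + A α β ξ * v.2.1 α ξ η * C β * C η
          + A α β ξ * B α ξ η * v.2.2 β * C η + A α β ξ * B α ξ η * C β * v.2.2 η) := by
  have hF := HasFDerivAt.fun_sum (u := Finset.univ) (fun α (_ : α ∈ Finset.univ) =>
    HasFDerivAt.fun_sum (u := Finset.univ) (fun β (_ : β ∈ Finset.univ) =>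
      HasFDerivAt.fun_sum (u := Finset.univ) (fun ξ (_ : ξ ∈ Finset.univ) =>
        HasFDerivAt.fun_sum (u := Finset.univ) (fun η (_ : η ∈ Finset.univ) =>
          ((((TIE.pA d α β ξ).hasFDerivAt (x := (A, B, C))).mul
            ((TIE.pB d α ξ η).hasFDerivAt)).mul
              ((TIE.pC d β).hasFDerivAt)).mul ((TIE.pC d η).hasFDerivAt)))))
  have h2 : HasFDerivAt
      (fun x : TIE.E d =>
        ∑ α, ∑ β, ∑ ξ, ∑ η, x.1 α β ξ * x.2.1 α ξ η * x.2.2 β * x.2.2 η) _ (A, B, C) := hF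
  rw [h2.fderiv]
  simp only [ContinuousLinearMap.coe_sum', Finset.sum_apply, ContinuousLinearMap.add_apply,
    ContinuousLinearMap.smul_apply, TIE.pA_apply, TIE.pB_apply, TIE.pC_apply, smul_eq_mul, Pi.mul_apply]
  refine Finset.sum_congr rfl fun α _ => Finset.sum_congr rfl fun β _ =>
    Finset.sum_congr rfl fun ξ _ => Finset.sum_congr rfl fun η _ => ?_
  ring

lemma TIE.sum3_comm {n : ℕ} (g : Fin n → Fin n → Fin n → ℝ) :
    ∑ i, ∑ j, ∑ k, g i j k = ∑ j, ∑ k, ∑ i, g i j k := by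
  rw [Finset.sum_comm]
  exact Finset.sum_congr rfl fun _ _ => Finset.sum_comm

/-- the worked example (Eq. (3)) of the tensor identity for the scalar
`S = A^{αβ}_ξ B_α^{ξη} C_β C_η` built by contracting a tensor product of lower-rank
tensors. -/
theorem tensor_identity_example (d : ℕ) (hd : 1 ≤ d)
    (A B : Fin d → Fin d → Fin d → ℝ) (C : Fin d → ℝ)
    (S : (Fin d → Fin d → Fin d → ℝ) × (Fin d → Fin d → Fin d → ℝ) × (Fin d → ℝ) → ℝ)
    (hS : S = fun x => ∑ α, ∑ β, ∑ ξ, ∑ η, x.1 α β ξ * x.2.1 α ξ η * x.2.2 β * x.2.2 η) :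
    ∀ μ ν : Fin d,
      -(∑ β, ∑ ξ, fderiv ℝ S (A, B, C)
          ((fun a b c => if a = ν ∧ b = β ∧ c = ξ then 1 else 0), 0, 0) * A μ β ξ)
      - (∑ α, ∑ ξ, fderiv ℝ S (A, B, C)
          ((fun a b c => if a = α ∧ b = ν ∧ c = ξ then 1 else 0), 0, 0) * A α μ ξ)
      + (∑ α, ∑ β, fderiv ℝ S (A, B, C)
          ((fun a b c => if a = α ∧ b = β ∧ c = μ then 1 else 0), 0, 0) * A α β ν)
      - (∑ α, ∑ η, fderiv ℝ S (A, B, C)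
          (0, (fun a b c => if a = α ∧ b = ν ∧ c = η then 1 else 0), 0) * B α μ η)
      - (∑ α, ∑ ξ, fderiv ℝ S (A, B, C)
          (0, (fun a b c => if a = α ∧ b = ξ ∧ c = ν then 1 else 0), 0) * B α ξ μ)
      + (∑ ξ, ∑ η, fderiv ℝ S (A, B, C)
          (0, (fun a b c => if a = μ ∧ b = ξ ∧ c = η then 1 else 0), 0) * B ν ξ η)
      + fderiv ℝ S (A, B, C) (0, 0, Pi.single μ 1) * C ν
      = 0 := by
  intro μ ν
  have h1 : ∀ β ξ : Fin d, fderiv ℝ S (A, B, C)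
        ((fun a b c => if a = ν ∧ b = β ∧ c = ξ then 1 else 0), 0, 0)
      = ∑ η, B ν ξ η * C β * C η := by
    intro β ξ; rw [hS, TIE.fderiv_S_apply]
    simp [ite_and, mul_ite, ite_mul, Finset.sum_ite_eq', Finset.sum_ite_eq]
  have h2 : ∀ α ξ : Fin d, fderiv ℝ S (A, B, C)
        ((fun a b c => if a = α ∧ b = ν ∧ c = ξ then 1 else 0), 0, 0)
      = ∑ η, B α ξ η * C ν * C η := by
    intro α ξ; rw [hS, TIE.fderiv_S_apply]
    simp [ite_and, mul_ite, ite_mul, Finset.sum_ite_eq', Finset.sum_ite_eq]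
  have h3 : ∀ α β : Fin d, fderiv ℝ S (A, B, C)
        ((fun a b c => if a = α ∧ b = β ∧ c = μ then 1 else 0), 0, 0)
      = ∑ η, B α μ η * C β * C η := by
    intro α β; rw [hS, TIE.fderiv_S_apply]
    simp [ite_and, mul_ite, ite_mul, Finset.sum_ite_eq', Finset.sum_ite_eq]
  have h4 : ∀ α η : Fin d, fderiv ℝ S (A, B, C)
        (0, (fun a b c => if a = α ∧ b = ν ∧ c = η then 1 else 0), 0)
      = ∑ β, A α β ν * C β * C η := by
    intro α η; rw [hS, TIE.fderiv_S_apply]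
    simp [ite_and, mul_ite, ite_mul, Finset.sum_ite_eq', Finset.sum_ite_eq]
  have h5 : ∀ α ξ : Fin d, fderiv ℝ S (A, B, C)
        (0, (fun a b c => if a = α ∧ b = ξ ∧ c = ν then 1 else 0), 0)
      = ∑ β, A α β ξ * C β * C ν := by
    intro α ξ; rw [hS, TIE.fderiv_S_apply]
    simp [ite_and, mul_ite, ite_mul, Finset.sum_ite_eq', Finset.sum_ite_eq]
  have h6 : ∀ ξ η : Fin d, fderiv ℝ S (A, B, C)
        (0, (fun a b c => if a = μ ∧ b = ξ ∧ c = η then 1 else 0), 0)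
      = ∑ β, A μ β ξ * C β * C η := by
    intro ξ η; rw [hS, TIE.fderiv_S_apply]
    simp [ite_and, mul_ite, ite_mul, Finset.sum_ite_eq', Finset.sum_ite_eq]
  have h7 : fderiv ℝ S (A, B, C) (0, 0, Pi.single μ 1)
      = (∑ α, ∑ ξ, ∑ η, A α μ ξ * B α ξ η * C η)
        + (∑ α, ∑ β, ∑ ξ, A α β ξ * B α ξ μ * C β) := by
    rw [hS, TIE.fderiv_S_apply]
    simp [Pi.single_apply, mul_ite, ite_mul, Finset.sum_ite_eq', Finset.sum_ite_eq,
      Finset.sum_add_distrib]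
  simp only [h1, h2, h3, h4, h5, h6, h7]
  set X1 := ∑ β, ∑ ξ, ∑ η, A μ β ξ * B ν ξ η * C β * C η with hX1
  set X2 := ∑ α, ∑ ξ, ∑ η, A α μ ξ * B α ξ η * C ν * C η with hX2
  set X3 := ∑ α, ∑ β, ∑ η, A α β ν * B α μ η * C β * C η with hX3
  set X4 := ∑ α, ∑ β, ∑ ξ, A α β ξ * B α ξ μ * C β * C ν with hX4
  have e1 : ∑ β, ∑ ξ, (∑ η, B ν ξ η * C β * C η) * A μ β ξ = X1 := by
    rw [hX1]
    refine Finset.sum_congr rfl fun β _ => Finset.sum_congr rfl fun ξ _ => ?_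
    rw [Finset.sum_mul]
    exact Finset.sum_congr rfl fun η _ => by ring
  have e2 : ∑ α, ∑ ξ, (∑ η, B α ξ η * C ν * C η) * A α μ ξ = X2 := by
    rw [hX2]
    refine Finset.sum_congr rfl fun α _ => Finset.sum_congr rfl fun ξ _ => ?_
    rw [Finset.sum_mul]
    exact Finset.sum_congr rfl fun η _ => by ring
  have e3 : ∑ α, ∑ β, (∑ η, B α μ η * C β * C η) * A α β ν = X3 := by
    rw [hX3]
    refine Finset.sum_congr rfl fun α _ => Finset.sum_congr rfl fun β _ => ?_
    rw [Finset.sum_mul]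
    exact Finset.sum_congr rfl fun η _ => by ring
  have e4 : ∑ α, ∑ η, (∑ β, A α β ν * C β * C η) * B α μ η = X3 := by
    rw [hX3]
    refine Finset.sum_congr rfl fun α _ => ?_
    simp only [Finset.sum_mul]
    rw [Finset.sum_comm]
    exact Finset.sum_congr rfl fun β _ => Finset.sum_congr rfl fun η _ => by ring
  have e5 : ∑ α, ∑ ξ, (∑ β, A α β ξ * C β * C ν) * B α ξ μ = X4 := by
    rw [hX4]
    refine Finset.sum_congr rfl fun α _ => ?_
    simp only [Finset.sum_mul]
    rw [Finset.sum_comm]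
    exact Finset.sum_congr rfl fun β _ => Finset.sum_congr rfl fun ξ _ => by ring
  have e6 : ∑ ξ, ∑ η, (∑ β, A μ β ξ * C β * C η) * B ν ξ η = X1 := by
    rw [hX1, TIE.sum3_comm (fun β ξ η => A μ β ξ * B ν ξ η * C β * C η)]
    simp only [Finset.sum_mul]
    exact Finset.sum_congr rfl fun ξ _ => Finset.sum_congr rfl fun η _ =>
      Finset.sum_congr rfl fun β _ => by ring
  have e7 : ((∑ α, ∑ ξ, ∑ η, A α μ ξ * B α ξ η * C η)
      + (∑ α, ∑ β, ∑ ξ, A α β ξ * B α ξ μ * C β)) * C ν = X2 + X4 := by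
    rw [add_mul, hX2, hX4]
    congr 1
    · simp only [Finset.sum_mul]
      exact Finset.sum_congr rfl fun α _ => Finset.sum_congr rfl fun ξ _ =>
        Finset.sum_congr rfl fun η _ => by ring
    · simp only [Finset.sum_mul]
  rw [e1, e2, e3, e4, e5, e6, e7]
  ring
end

section
/- Let f, G : Matrix (Fin 4) (Fin 4) ℝ with det G < 0, a : Fin 4 → ℝ, m : ℝ, and define the Proca Lagrangian density L̃(f, a, G) = ( −(1/4) ∑_{α,β,ξ,η} f α β · f ξ η · G α ξ · G β η + (1/2) m^2 ∑_{α,β} a α · a β · G α β ) · (−det G)^{−1/2}. Then for all μ, ν ∈ Fin 4: −∑_{β} (∂L̃/∂G_{(ν,β)}) · G μ β − ∑_{β} (∂L̃/∂G_{(β,ν)}) · G β μ + ∑_{β} (∂L̃/∂f_{(μ,β)}) · f ν β + ∑_{β} (∂L̃/∂f_{(β,μ)}) · f β ν + (∂L̃/∂a_μ) · a ν = (if μ = ν then L̃(f, a, G) else 0), where all partial derivatives are Fréchet partial derivatives at (f, a, G). -/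
attribute [local instance] Matrix.normedAddCommGroup Matrix.normedSpace

open Matrix

private abbrev PM4 := Matrix (Fin 4) (Fin 4) ℝ × (Fin 4 → ℝ) × Matrix (Fin 4) (Fin 4) ℝ

private lemma proca_key1 (M N : Matrix (Fin 4) (Fin 4) ℝ) :
    ∑ α, ∑ β, ∑ ξ, ∑ η, M α β * M ξ η * N α ξ * N β η = (Mᵀ * N * M * Nᵀ).trace := by
  simp [Matrix.trace, Matrix.mul_apply, Matrix.diag, Fin.sum_univ_four, Matrix.transpose_apply]
  ring

private lemma proca_key2 (N : Matrix (Fin 4) (Fin 4) ℝ) (a : Fin 4 → ℝ) :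
    ∑ α, ∑ β, a α * a β * N α β = a ⬝ᵥ (N *ᵥ a) := by
  simp [dotProduct, Matrix.mulVec, Fin.sum_univ_four]
  ring

private lemma proca_trace_inv (f G A B : Matrix (Fin 4) (Fin 4) ℝ)
    (hBA : B * A = 1) :
    ((Bᵀ * f * B)ᵀ * (A * G * Aᵀ) * (Bᵀ * f * B) * (A * G * Aᵀ)ᵀ).trace
      = (fᵀ * G * f * Gᵀ).trace := by
  have hABt : Aᵀ * Bᵀ = 1 := by rw [← Matrix.transpose_mul, hBA, Matrix.transpose_one]
  have e1 : (Bᵀ * f * B)ᵀ = Bᵀ * fᵀ * B := by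
    simp [Matrix.transpose_mul, Matrix.mul_assoc]
  have e2 : (A * G * Aᵀ)ᵀ = A * Gᵀ * Aᵀ := by
    simp [Matrix.transpose_mul, Matrix.mul_assoc]
  rw [e1, e2]
  have key : Bᵀ * fᵀ * B * (A * G * Aᵀ) * (Bᵀ * f * B) * (A * Gᵀ * Aᵀ)
      = Bᵀ * (fᵀ * G * f * Gᵀ) * Aᵀ := by
    calc Bᵀ * fᵀ * B * (A * G * Aᵀ) * (Bᵀ * f * B) * (A * Gᵀ * Aᵀ)
        = Bᵀ * fᵀ * ((B * A) * G * ((Aᵀ * Bᵀ) * f * ((B * A) * Gᵀ * Aᵀ))) := by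
          simp only [Matrix.mul_assoc]
      _ = Bᵀ * (fᵀ * G * f * Gᵀ) * Aᵀ := by
          rw [hBA, hABt]; simp only [Matrix.one_mul, Matrix.mul_assoc]
  rw [key, Matrix.trace_mul_cycle, ← Matrix.mul_assoc, hABt, Matrix.one_mul]

private lemma proca_vec_inv (G A B : Matrix (Fin 4) (Fin 4) ℝ) (a : Fin 4 → ℝ)
    (hBA : B * A = 1) :
    (Bᵀ *ᵥ a) ⬝ᵥ ((A * G * Aᵀ) *ᵥ (Bᵀ *ᵥ a)) = a ⬝ᵥ (G *ᵥ a) := by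
  have hABt : Aᵀ * Bᵀ = 1 := by rw [← Matrix.transpose_mul, hBA, Matrix.transpose_one]
  have key : B * (A * G * Aᵀ * Bᵀ) = G := by
    calc B * (A * G * Aᵀ * Bᵀ) = (B * A) * (G * (Aᵀ * Bᵀ)) := by simp only [Matrix.mul_assoc]
    _ = G := by rw [hBA, hABt]; simp
  rw [Matrix.mulVec_mulVec, Matrix.mulVec_transpose, Matrix.dotProduct_mulVec,
    Matrix.vecMul_vecMul, key, ← Matrix.dotProduct_mulVec]

private lemma proca_rpow (dA dG : ℝ) (h1 : 0 < dA) (h2 : dG < 0) :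
    (-(dA * dG * dA)) ^ (-(1/2) : ℝ) = dA⁻¹ * (-dG) ^ (-(1/2) : ℝ) := by
  have e : -(dA * dG * dA) = dA^2 * (-dG) := by ring
  rw [e, Real.mul_rpow (by positivity) (by linarith)]
  congr 1
  rw [← Real.rpow_natCast dA 2, ← Real.rpow_mul h1.le]
  norm_num [Real.rpow_neg_one]

private lemma proca_EE (μ ν : Fin 4) :
    (Matrix.single ν μ (1:ℝ)) * (Matrix.single ν μ 1)
      = (if μ = ν then (1:ℝ) else 0) • Matrix.single ν μ 1 := by
  ext i j
  rw [Matrix.mul_apply]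
  by_cases h1 : ν = i <;> by_cases h2 : μ = j <;> by_cases h3 : μ = ν <;>
    simp_all [Matrix.single, ite_and, Finset.sum_ite_eq, Finset.sum_ite_eq',
      mul_ite, ite_mul]

private lemma proca_Et (μ ν : Fin 4) :
    (Matrix.single ν μ (1:ℝ))ᵀ = Matrix.single μ ν 1 := by
  ext i j; simp [Matrix.single, and_comm]

private lemma proca_det (μ ν : Fin 4) (t : ℝ) :
    (1 + t • Matrix.single ν μ (1:ℝ)).det = 1 + t * (if μ = ν then (1:ℝ) else 0) := by
  have h : t • Matrix.single ν μ (1:ℝ)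
      = replicateCol Unit (Pi.single ν t) * replicateRow Unit (Pi.single μ (1:ℝ)) := by
    ext i j
    rw [Matrix.mul_apply]
    by_cases h1 : ν = i <;> by_cases h2 : μ = j <;>
      simp_all [Matrix.single, Pi.single_apply, ite_and, eq_comm]
  rw [h, Matrix.det_one_add_replicateCol_mul_replicateRow]
  by_cases h3 : μ = ν <;>
    simp_all [Pi.single_apply, dotProduct, Finset.sum_ite_eq, eq_comm]

private lemma proca_id1 (μ ν : Fin 4) (f : Matrix (Fin 4) (Fin 4) ℝ) :
    (∑ β, f ν β • Matrix.single μ β (1:ℝ)) = (Matrix.single ν μ (1:ℝ))ᵀ * f := by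
  rw [proca_Et]; ext i j
  rw [Matrix.mul_apply]
  by_cases h : μ = i <;>
    simp [Matrix.sum_apply, Matrix.single, h, ite_and,
      Finset.sum_ite_eq, Finset.sum_ite_eq', mul_ite, ite_mul]

private lemma proca_id2 (μ ν : Fin 4) (f : Matrix (Fin 4) (Fin 4) ℝ) :
    (∑ β, f β ν • Matrix.single β μ (1:ℝ)) = f * Matrix.single ν μ (1:ℝ) := by
  ext i j
  rw [Matrix.mul_apply]
  by_cases h : μ = j <;>
    simp [Matrix.sum_apply, Matrix.single, h, ite_and,
      Finset.sum_ite_eq, Finset.sum_ite_eq', mul_ite, ite_mul]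

private lemma proca_id3 (μ ν : Fin 4) (G : Matrix (Fin 4) (Fin 4) ℝ) :
    (∑ β, G μ β • Matrix.single ν β (1:ℝ)) = Matrix.single ν μ (1:ℝ) * G := by
  ext i j
  rw [Matrix.mul_apply]
  by_cases h : ν = i <;>
    simp [Matrix.sum_apply, Matrix.single, h, ite_and,
      Finset.sum_ite_eq, Finset.sum_ite_eq', mul_ite, ite_mul]

private lemma proca_id4 (μ ν : Fin 4) (G : Matrix (Fin 4) (Fin 4) ℝ) :
    (∑ β, G β μ • Matrix.single β ν (1:ℝ)) = G * (Matrix.single ν μ (1:ℝ))ᵀ := by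
  rw [proca_Et]; ext i j
  rw [Matrix.mul_apply]
  by_cases h : ν = j <;>
    simp [Matrix.sum_apply, Matrix.single, h, ite_and,
      Finset.sum_ite_eq, Finset.sum_ite_eq', mul_ite, ite_mul]

private lemma proca_id5 (μ ν : Fin 4) (a : Fin 4 → ℝ) :
    a ν • (Pi.single μ (1:ℝ) : Fin 4 → ℝ) = (Matrix.single ν μ (1:ℝ))ᵀ *ᵥ a := by
  rw [proca_Et]; ext i
  rw [Matrix.mulVec]
  by_cases h : μ = i <;>
    simp [Matrix.single, Pi.single_apply, dotProduct, h,
      ite_and, Finset.sum_ite_eq, Finset.sum_ite_eq', mul_ite, ite_mul, eq_comm, mul_comm]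

private lemma proca_expand (E : Matrix (Fin 4) (Fin 4) ℝ) (δ : ℝ) (hEE : E * E = δ • E)
    (u v : ℝ) : (1 + u • E) * (1 - v • E) = 1 + (u - v - u*v*δ) • E := by
  have h : (1 + u • E) * (1 - v • E)
      = 1 - v • E + u • E - (u*v) • (E * E) := by
    simp only [Matrix.add_mul, Matrix.mul_sub, Matrix.mul_one, Matrix.one_mul,
      Matrix.smul_mul, Matrix.mul_smul, smul_smul]
    module
  rw [h, hEE, smul_smul]
  module

private lemma proca_expand' (E : Matrix (Fin 4) (Fin 4) ℝ) (δ : ℝ) (hEE : E * E = δ • E)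
    (u v : ℝ) : (1 - v • E) * (1 + u • E) = 1 + (u - v - u*v*δ) • E := by
  have h : (1 - v • E) * (1 + u • E)
      = 1 + u • E - v • E - (v*u) • (E * E) := by
    simp only [Matrix.sub_mul, Matrix.mul_add, Matrix.mul_one, Matrix.one_mul,
      Matrix.smul_mul, Matrix.mul_smul, smul_smul]
    module
  rw [h, hEE, smul_smul]
  module

private lemma proca_c1eq (E f : Matrix (Fin 4) (Fin 4) ℝ) (s : ℝ) :
    (1 - s • E)ᵀ * f * (1 - s • E)
      = f - s • (Eᵀ * f + f * E) + (s * s) • (Eᵀ * f * E) := by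
  rw [Matrix.transpose_sub, Matrix.transpose_smul, Matrix.transpose_one]
  simp only [Matrix.sub_mul, Matrix.mul_sub, Matrix.one_mul, Matrix.mul_one,
    Matrix.smul_mul, Matrix.mul_smul, smul_smul, smul_sub, smul_add]
  module

private lemma proca_c2eq (E : Matrix (Fin 4) (Fin 4) ℝ) (a : Fin 4 → ℝ) (s : ℝ) :
    (1 - s • E)ᵀ *ᵥ a = a - s • (Eᵀ *ᵥ a) := by
  rw [Matrix.transpose_sub, Matrix.transpose_smul, Matrix.transpose_one]
  simp [Matrix.sub_mulVec, Matrix.smul_mulVec]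

private lemma proca_c3eq (E G : Matrix (Fin 4) (Fin 4) ℝ) (t : ℝ) :
    (1 + t • E) * G * (1 + t • E)ᵀ
      = G + t • (E * G + G * Eᵀ) + (t * t) • (E * G * Eᵀ) := by
  rw [Matrix.transpose_add, Matrix.transpose_smul, Matrix.transpose_one]
  simp only [Matrix.add_mul, Matrix.mul_add, Matrix.one_mul, Matrix.mul_one,
    Matrix.smul_mul, Matrix.mul_smul, smul_smul, smul_add]
  module

/-- the tensor identity (Eq. (13)) for the Proca Lagrangian density,
a relative scalar of weight 1. -/
theorem proca_identity
    (f G : Matrix (Fin 4) (Fin 4) ℝ) (hdet : G.det < 0)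
    (a : Fin 4 → ℝ) (m : ℝ)
    (L : Matrix (Fin 4) (Fin 4) ℝ × (Fin 4 → ℝ) × Matrix (Fin 4) (Fin 4) ℝ → ℝ)
    (hL : L = fun x =>
      (-(1 / 4) * ∑ α, ∑ β, ∑ ξ, ∑ η, x.1 α β * x.1 ξ η * x.2.2 α ξ * x.2.2 β η
        + (1 / 2) * m ^ 2 * ∑ α, ∑ β, x.2.1 α * x.2.1 β * x.2.2 α β)
      * (-x.2.2.det) ^ (-(1 / 2) : ℝ)) :
    ∀ μ ν : Fin 4,
      -(∑ β, fderiv ℝ L (f, a, G) (0, 0, Matrix.single ν β 1) * G μ β)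
      - (∑ β, fderiv ℝ L (f, a, G) (0, 0, Matrix.single β ν 1) * G β μ)
      + (∑ β, fderiv ℝ L (f, a, G) (Matrix.single μ β 1, 0, 0) * f ν β)
      + (∑ β, fderiv ℝ L (f, a, G) (Matrix.single β μ 1, 0, 0) * f β ν)
      + fderiv ℝ L (f, a, G) (0, Pi.single μ 1, 0) * a ν
      = if μ = ν then L (f, a, G) else 0 := by
  intro μ ν
  -- trace form of L
  have Ltr : ∀ x : PM4, L x =
      (-(1/4) * (x.1ᵀ * x.2.2 * x.1 * x.2.2ᵀ).trace
        + (1/2) * m^2 * (x.2.1 ⬝ᵥ (x.2.2 *ᵥ x.2.1)))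
      * (-x.2.2.det) ^ (-(1/2) : ℝ) := by
    intro x; rw [hL]; dsimp only; rw [proca_key1, proca_key2]
  -- differentiability of L at p
  set p : PM4 := (f, a, G) with hp
  have hGdet : p.2.2.det < 0 := hdet
  have hentry : ∀ i j : Fin 4, DifferentiableAt ℝ (fun x : PM4 => x.2.2 i j) p := by
    intro i j; fun_prop
  have hdetd : DifferentiableAt ℝ (fun x : PM4 => x.2.2.det) p := by
    have h : (fun x : PM4 => x.2.2.det)
        = fun x => ∑ σ : Equiv.Perm (Fin 4), ((Equiv.Perm.sign σ : ℤ) : ℝ) * ∏ i, x.2.2 (σ i) i := by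
      funext x; rw [Matrix.det_apply']
    rw [h]
    exact DifferentiableAt.fun_sum fun σ _ => DifferentiableAt.const_mul
      ((HasFDerivAt.finset_prod (u := Finset.univ)
        (fun i _ => (hentry (σ i) i).hasFDerivAt)).differentiableAt) _
  have hdiffL : DifferentiableAt ℝ L p := by
    rw [hL]
    apply DifferentiableAt.mul
    · apply DifferentiableAt.add
      · apply DifferentiableAt.const_mul
        apply DifferentiableAt.fun_sum; intro α _
        apply DifferentiableAt.fun_sum; intro β _
        apply DifferentiableAt.fun_sum; intro ξ _
        apply DifferentiableAt.fun_sum; intro η _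
        fun_prop
      · apply DifferentiableAt.const_mul
        apply DifferentiableAt.fun_sum; intro α _
        apply DifferentiableAt.fun_sum; intro β _
        fun_prop
    · exact DifferentiableAt.rpow_const hdetd.neg
        (Or.inl (ne_of_gt (by linarith : (0:ℝ) < -p.2.2.det)))
  -- basic objects
  set E : Matrix (Fin 4) (Fin 4) ℝ := Matrix.single ν μ 1 with hE
  set δ : ℝ := if μ = ν then (1:ℝ) else 0 with hδ
  have hδ01 : δ = 0 ∨ δ = 1 := by rw [hδ]; split_ifs <;> simp
  have hEE : E * E = δ • E := proca_EE μ ν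
  have hdetA : ∀ t : ℝ, (1 + t • E).det = 1 + t * δ := fun t => proca_det μ ν t
  -- the curve
  set s : ℝ → ℝ := fun t => t / (1 + t * δ) with hs_def
  set A : ℝ → Matrix (Fin 4) (Fin 4) ℝ := fun t => 1 + t • E with hA_def
  set B : ℝ → Matrix (Fin 4) (Fin 4) ℝ := fun t => 1 - s t • E with hB_def
  set c : ℝ → PM4 := fun t => ((B t)ᵀ * f * B t, (B t)ᵀ *ᵥ a, A t * G * (A t)ᵀ) with hc_def
  have hB_eq : ∀ t, B t = 1 - s t • E := fun t => rfl
  have hA_eq : ∀ t, A t = 1 + t • E := fun t => rfl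
  have hc0 : c 0 = p := by
    have : s 0 = 0 := by simp [hs_def]
    simp [hc_def, hB_eq, hA_eq, this, hp]
  -- inverse property on small t
  have hden : ∀ t : ℝ, t ∈ Set.Ioo (-(1/2):ℝ) (1/2) → 0 < 1 + t * δ := by
    intro t ht
    rcases hδ01 with h | h <;> rw [h] <;> [simp; skip]
    obtain ⟨h1, h2⟩ := ht; nlinarith
  have hscal : ∀ t : ℝ, t ∈ Set.Ioo (-(1/2):ℝ) (1/2) → t - s t - t * s t * δ = 0 := by
    intro t ht
    have h0 : (1 + t * δ) ≠ 0 := ne_of_gt (hden t ht)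
    rw [hs_def]
    field_simp
    ring
  have hABt : ∀ t : ℝ, t ∈ Set.Ioo (-(1/2):ℝ) (1/2) → A t * B t = 1 := by
    intro t ht
    rw [hA_eq, hB_eq, proca_expand E δ hEE, hscal t ht]; simp
  have hBAt : ∀ t : ℝ, t ∈ Set.Ioo (-(1/2):ℝ) (1/2) → B t * A t = 1 := by
    intro t ht
    rw [hA_eq, hB_eq, proca_expand' E δ hEE, hscal t ht]; simp
  -- invariance of L along the curve
  have hinv : ∀ t : ℝ, t ∈ Set.Ioo (-(1/2):ℝ) (1/2) →
      L (c t) = (1 + t * δ)⁻¹ * L p := by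
    intro t ht
    have hdAval : (A t).det = 1 + t * δ := hdetA t
    have hdApos : 0 < (A t).det := by rw [hdAval]; exact hden t ht
    have hdet3 : (A t * G * (A t)ᵀ).det = (A t).det * G.det * (A t).det := by
      rw [Matrix.det_mul, Matrix.det_mul, Matrix.det_transpose]
    rw [Ltr (c t), Ltr p, hc_def]
    dsimp only
    rw [proca_trace_inv f G (A t) (B t) (hBAt t ht),
      proca_vec_inv G (A t) (B t) a (hBAt t ht), hdet3,
      proca_rpow _ _ hdApos hdet, hdAval]
    ring
  -- derivative of the curve at 0
  have hs1 : HasDerivAt s 1 0 := by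
    have h1 : HasDerivAt (fun t : ℝ => 1 + t * δ) δ 0 := by
      simpa using ((hasDerivAt_id (0:ℝ)).mul_const δ).const_add 1
    have := (hasDerivAt_id (0:ℝ)).fun_div h1 (by norm_num)
    simpa [hs_def] using this
  have hs0 : s 0 = 0 := by simp [hs_def]
  set M1 : Matrix (Fin 4) (Fin 4) ℝ := Eᵀ * f + f * E with hM1
  set N1 : Matrix (Fin 4) (Fin 4) ℝ := E * G + G * Eᵀ with hN1
  set va : Fin 4 → ℝ := Eᵀ *ᵥ a with hva
  set d : PM4 := (-M1, -va, N1) with hd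
  have hcd : HasDerivAt c d 0 := by
    have h1 : HasDerivAt (fun t => (B t)ᵀ * f * B t) (-M1) 0 := by
      have heq : (fun t => (B t)ᵀ * f * B t)
          = fun t => f - s t • M1 + (s t * s t) • (Eᵀ * f * E) := by
        funext t; rw [hB_eq, proca_c1eq, hM1]
      rw [heq]
      have ha := hs1.smul_const M1
      have hb := (hs1.mul hs1).smul_const (Eᵀ * f * E)
      have := ((hasDerivAt_const (0:ℝ) f).fun_sub ha).fun_add hb
      simp [hs0] at this; exact this
    have h2 : HasDerivAt (fun t => (B t)ᵀ *ᵥ a) (-va) 0 := by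
      have heq : (fun t => (B t)ᵀ *ᵥ a) = fun t => a - s t • va := by
        funext t; rw [hB_eq, proca_c2eq, hva]
      rw [heq]
      have := (hasDerivAt_const (0:ℝ) a).fun_sub (hs1.smul_const va)
      simpa using this
    have h3 : HasDerivAt (fun t => A t * G * (A t)ᵀ) N1 0 := by
      have heq : (fun t => A t * G * (A t)ᵀ)
          = fun t => G + t • N1 + (t * t) • (E * G * Eᵀ) := by
        funext t; rw [hA_eq, proca_c3eq, hN1]
      rw [heq]
      have ha := (hasDerivAt_id (0:ℝ)).smul_const N1
      have hb := ((hasDerivAt_id (0:ℝ)).mul (hasDerivAt_id (0:ℝ))).smul_const (E * G * Eᵀ)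
      have := ((hasDerivAt_const (0:ℝ) G).fun_add ha).fun_add hb
      simp at this; exact this
    exact h1.prodMk (h2.prodMk h3)
  -- chain rule and uniqueness
  have hcomp : HasDerivAt (fun t => L (c t)) (fderiv ℝ L p d) 0 := by
    have hF : HasFDerivAt L (fderiv ℝ L p) (c 0) := by rw [hc0]; exact hdiffL.hasFDerivAt
    exact hF.comp_hasDerivAt 0 hcd
  have hR : HasDerivAt (fun t : ℝ => (1 + t * δ)⁻¹ * L p) (-δ * L p) 0 := by
    have h1 : HasDerivAt (fun t : ℝ => 1 + t * δ) δ 0 := by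
      simpa using ((hasDerivAt_id (0:ℝ)).mul_const δ).const_add 1
    have := (h1.inv (by norm_num)).mul_const (L p)
    simpa using this
  have hev : (fun t => L (c t)) =ᶠ[nhds (0:ℝ)] fun t => (1 + t * δ)⁻¹ * L p := by
    filter_upwards [Ioo_mem_nhds (by norm_num : (-(1/2):ℝ) < 0) (by norm_num : (0:ℝ) < 1/2)]
      with t ht
    exact hinv t ht
  have hkey : fderiv ℝ L p d = -δ * L p :=
    hcomp.unique (hR.congr_of_eventuallyEq hev)
  -- rewrite the goal using linearity
  set D := fderiv ℝ L p with hD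
  have hsm1 : ∀ (r : ℝ) (u : Matrix (Fin 4) (Fin 4) ℝ),
      D (u, 0, 0) * r = D (r • u, 0, 0) := by
    intro r u
    rw [mul_comm, ← smul_eq_mul, ← D.map_smul]
    congr 1
    simp [Prod.smul_mk]
  have hsm3 : ∀ (r : ℝ) (v : Matrix (Fin 4) (Fin 4) ℝ),
      D (0, 0, v) * r = D (0, 0, r • v) := by
    intro r v
    rw [mul_comm, ← smul_eq_mul, ← D.map_smul]
    congr 1
    simp [Prod.smul_mk]
  have hsum1 : ∀ (g : Fin 4 → Matrix (Fin 4) (Fin 4) ℝ),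
      ∑ β, D (g β, 0, 0) = D (∑ β, g β, 0, 0) := by
    intro g
    rw [← _root_.map_sum D]
    congr 1
    simp [Prod.ext_iff, Prod.fst_sum, Prod.snd_sum]
  have hsum3 : ∀ (g : Fin 4 → Matrix (Fin 4) (Fin 4) ℝ),
      ∑ β, D (0, 0, g β) = D (0, 0, ∑ β, g β) := by
    intro g
    rw [← _root_.map_sum D]
    congr 1
    simp [Prod.ext_iff, Prod.fst_sum, Prod.snd_sum]
  have hterm1 : ∑ β, D (0, 0, Matrix.single ν β 1) * G μ β = D (0, 0, E * G) := by
    rw [hE, ← proca_id3 μ ν G]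
    simp_rw [hsm3]
    rw [hsum3]
  have hterm2 : ∑ β, D (0, 0, Matrix.single β ν 1) * G β μ = D (0, 0, G * Eᵀ) := by
    rw [hE, ← proca_id4 μ ν G]
    simp_rw [hsm3]
    rw [hsum3]
  have hterm3 : ∑ β, D (Matrix.single μ β 1, 0, 0) * f ν β = D (Eᵀ * f, 0, 0) := by
    rw [hE, ← proca_id1 μ ν f]
    simp_rw [hsm1]
    rw [hsum1]
  have hterm4 : ∑ β, D (Matrix.single β μ 1, 0, 0) * f β ν = D (f * E, 0, 0) := by
    rw [hE, ← proca_id2 μ ν f]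
    simp_rw [hsm1]
    rw [hsum1]
  have hterm5 : D (0, Pi.single μ 1, 0) * a ν = D (0, va, 0) := by
    rw [mul_comm, ← smul_eq_mul, ← D.map_smul]
    congr 1
    rw [hva, hE, ← proca_id5 μ ν a]
    simp [Prod.smul_mk]
  rw [hterm1, hterm2, hterm3, hterm4, hterm5]
  have hfinal : -D (0, 0, E * G) - D (0, 0, G * Eᵀ) + D (Eᵀ * f, 0, 0) + D (f * E, 0, 0)
      + D (0, va, 0) = D (-d) := by
    have hd' : (-d : PM4) = (M1, va, -N1) := by
      rw [hd]; simp [Prod.neg_mk]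
    rw [hd']
    have e0 : D (M1, va, -N1) = D (M1, 0, 0) + D (0, va, 0) + D (0, 0, -N1) := by
      rw [← map_add, ← map_add]
      congr 1
      simp [Prod.ext_iff]
    rw [e0, hM1, hN1]
    have e1 : D (Eᵀ * f + f * E, (0:Fin 4 → ℝ), (0:Matrix (Fin 4) (Fin 4) ℝ))
        = D (Eᵀ * f, 0, 0) + D (f * E, 0, 0) := by
      rw [← map_add]
      congr 1
      simp [Prod.ext_iff]
    have e3 : D ((0:Matrix (Fin 4) (Fin 4) ℝ), (0:Fin 4 → ℝ), -(E * G + G * Eᵀ))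
        = -D (0, 0, E * G) - D (0, 0, G * Eᵀ) := by
      have h1 : ((0:Matrix (Fin 4) (Fin 4) ℝ), (0:Fin 4 → ℝ), -(E * G + G * Eᵀ))
          = -(((0:Matrix (Fin 4) (Fin 4) ℝ), (0:Fin 4 → ℝ), E * G)
              + ((0:Matrix (Fin 4) (Fin 4) ℝ), (0:Fin 4 → ℝ), G * Eᵀ)) := by
        simp [Prod.ext_iff]
      rw [h1, map_neg, map_add]
      ring
    rw [e1, e3]
    ring
  rw [hfinal, map_neg, hkey]
  rw [hδ]
  split_ifs <;> simp
end

section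
/- Let f, G : Matrix (Fin 4) (Fin 4) ℝ with G symmetric and det G < 0, a : Fin 4 → ℝ, m : ℝ, and let L̃(f, a, G) = ( −(1/4) ∑_{α,β,ξ,η} f α β · f ξ η · G α ξ · G β η + (1/2) m^2 ∑_{α,β} a α · a β · G α β ) · (−det G)^{−1/2} be the Proca Lagrangian density. Define the metric energy-momentum tensor density T̃^μ_ν = ∑_{β} (∂L̃/∂G_{(ν,β)}) · G μ β + ∑_{β} (∂L̃/∂G_{(β,ν)}) · G β μ and the canonical one θ̃^μ_ν = ∑_{β} (∂L̃/∂f_{(β,μ)}) · f β ν − (if μ = ν then L̃(f,a,G) else 0). Then for all μ, ν ∈ Fin 4: T̃^μ_ν = θ̃^μ_ν + ∑_{β} (∂L̃/∂f_{(μ,β)}) · f ν β + (∂L̃/∂a_μ) · a ν. In particular the metric and canonical energy-momentum tensors do not coincide for the Proca system. -/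
attribute [local instance] Matrix.normedAddCommGroup Matrix.normedSpace

open Matrix ContinuousLinearMap

open Matrix

noncomputable def detCML : ContinuousMultilinearMap ℝ (fun _ : Fin 4 => (Fin 4 → ℝ)) ℝ :=
  (Matrix.detRowAlternating (n := Fin 4) (R := ℝ)).toMultilinearMap.mkContinuous 24
    (by
      intro mrows
      rw [show ((Matrix.detRowAlternating (n := Fin 4) (R := ℝ)).toMultilinearMap mrows)
            = Matrix.det (Matrix.of mrows) from rfl]
      rw [Matrix.det_apply]
      calc ‖∑ σ : Equiv.Perm (Fin 4), Equiv.Perm.sign σ • ∏ i, Matrix.of mrows (σ i) i‖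
          ≤ ∑ σ : Equiv.Perm (Fin 4), ‖Equiv.Perm.sign σ • ∏ i, Matrix.of mrows (σ i) i‖ :=
            norm_sum_le _ _
        _ ≤ ∑ _σ : Equiv.Perm (Fin 4), ∏ i, ‖mrows i‖ := by
            apply Finset.sum_le_sum
            intro σ _
            rw [Units.smul_def, norm_zsmul ℝ]
            calc ‖((Equiv.Perm.sign σ : ℤˣ) : ℤ)‖ * ‖∏ i, Matrix.of mrows (σ i) i‖
                ≤ 1 * ‖∏ i, Matrix.of mrows (σ i) i‖ := by
                  gcongr
                  rcases Int.units_eq_one_or (Equiv.Perm.sign σ) with h | h <;> simp [h]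
              _ = ‖∏ i, Matrix.of mrows (σ i) i‖ := one_mul _
              _ ≤ ∏ i, ‖mrows (σ i)‖ := by
                  rw [norm_prod]
                  gcongr with i
                  exact norm_le_pi_norm (mrows (σ i)) i
              _ = ∏ i, ‖mrows i‖ := Equiv.prod_comp σ fun i => ‖mrows i‖
        _ = 24 * ∏ i, ‖mrows i‖ := by
            rw [Finset.sum_const, Finset.card_univ, nsmul_eq_mul]
            norm_num [Fintype.card_perm, Nat.factorial])

noncomputable def Ddet (G : Matrix (Fin 4) (Fin 4) ℝ) : Matrix (Fin 4) (Fin 4) ℝ →L[ℝ] ℝ :=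
  detCML.linearDeriv G

theorem detCML_apply (r : Fin 4 → Fin 4 → ℝ) : detCML r = Matrix.det (Matrix.of r) := by
  have : ⇑detCML = ⇑(Matrix.detRowAlternating (n := Fin 4) (R := ℝ)).toMultilinearMap :=
    MultilinearMap.coe_mkContinuous _ _ _
  rw [this]; rfl

theorem det_eq_detCML : (Matrix.det : Matrix (Fin 4) (Fin 4) ℝ → ℝ) = ⇑detCML := by
  funext M; exact (detCML_apply M).symm

theorem hasFDerivAt_det4 (G : Matrix (Fin 4) (Fin 4) ℝ) :
    HasFDerivAt (Matrix.det : Matrix (Fin 4) (Fin 4) ℝ → ℝ) (Ddet G) G := by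
  rw [det_eq_detCML]; exact detCML.hasFDerivAt G

theorem detDeriv_std (G : Matrix (Fin 4) (Fin 4) ℝ) (ρ σ : Fin 4) :
    Ddet G (Matrix.single ρ σ 1) = G.adjugate σ ρ := by
  rw [show (Ddet G (Matrix.single ρ σ 1) : ℝ)
      = detCML.linearDeriv G (Matrix.single ρ σ 1) from rfl]
  erw [ContinuousMultilinearMap.linearDeriv_apply]
  have h : ∀ i : Fin 4, detCML (Function.update G i (Matrix.single ρ σ 1 i))
      = if i = ρ then G.adjugate σ ρ else 0 := by
    intro i
    rw [detCML_apply]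
    by_cases hi : i = ρ
    · subst hi
      have h1 : (Matrix.single i σ (1:ℝ)) i = Pi.single σ 1 := by
        ext j; simp [Matrix.single, Pi.single_apply, eq_comm]
      rw [h1, if_pos rfl, Matrix.adjugate_apply]
      rfl
    · have h1 : (Matrix.single ρ σ (1:ℝ)) i = 0 := by
        ext j
        simp only [Matrix.single, Matrix.of_apply, Pi.zero_apply, ite_eq_right_iff]
        rintro ⟨h, -⟩; exact absurd h.symm hi
      rw [h1, if_neg hi]
      have h2 : Matrix.of (Function.update G i (0 : Fin 4 → ℝ)) = Matrix.updateRow G i 0 := rfl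
      rw [h2]
      apply Matrix.det_eq_zero_of_row_eq_zero i
      intro j; simp
  rw [Finset.sum_congr rfl (fun i _ => h i)]
  simp

noncomputable section

abbrev M4 : Type := Matrix (Fin 4) (Fin 4) ℝ
abbrev X4 : Type := M4 × (Fin 4 → ℝ) × M4

def Fc (i j : Fin 4) : X4 →L[ℝ] ℝ :=
  (ContinuousLinearMap.proj j).comp ((ContinuousLinearMap.proj i).comp
    (ContinuousLinearMap.fst ℝ M4 ((Fin 4 → ℝ) × M4)))

def Ac (i : Fin 4) : X4 →L[ℝ] ℝ :=
  (ContinuousLinearMap.proj i).comp ((ContinuousLinearMap.fst ℝ (Fin 4 → ℝ) M4).comp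
    (ContinuousLinearMap.snd ℝ M4 ((Fin 4 → ℝ) × M4)))

def Cc (i j : Fin 4) : X4 →L[ℝ] ℝ :=
  (ContinuousLinearMap.proj j).comp ((ContinuousLinearMap.proj i).comp
    ((ContinuousLinearMap.snd ℝ (Fin 4 → ℝ) M4).comp
      (ContinuousLinearMap.snd ℝ M4 ((Fin 4 → ℝ) × M4))))

def DGc : X4 →L[ℝ] M4 :=
  (ContinuousLinearMap.snd ℝ (Fin 4 → ℝ) M4).comp
    (ContinuousLinearMap.snd ℝ M4 ((Fin 4 → ℝ) × M4))

@[simp] theorem Fc_apply (i j : Fin 4) (x : X4) : Fc i j x = x.1 i j := rfl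
@[simp] theorem Ac_apply (i : Fin 4) (x : X4) : Ac i x = x.2.1 i := rfl
@[simp] theorem Cc_apply (i j : Fin 4) (x : X4) : Cc i j x = x.2.2 i j := rfl
@[simp] theorem DGc_apply (x : X4) : DGc x = x.2.2 := rfl

end

section aux
variable (f G : M4) (a : Fin 4 → ℝ) (m : ℝ)

theorem proca_heval (hdet : G.det < 0) : ∀ v : X4, fderiv ℝ (fun x : X4 =>
      (-(1 / 4) * ∑ α, ∑ β, ∑ ξ, ∑ η, x.1 α β * x.1 ξ η * x.2.2 α ξ * x.2.2 β η
        + (1 / 2) * m ^ 2 * ∑ α, ∑ β, x.2.1 α * x.2.1 β * x.2.2 α β)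
      * (-x.2.2.det) ^ (-(1 / 2) : ℝ)) (f, a, G) v =
      (-(1 / 4) * ∑ α, ∑ β, ∑ ξ, ∑ η, f α β * f ξ η * G α ξ * G β η
        + (1 / 2) * m ^ 2 * ∑ α, ∑ β, a α * a β * G α β)
      * (-(1 / 2) * (-G.det) ^ ((-(1 / 2) : ℝ) - 1) * -(Ddet G v.2.2))
      + (-G.det) ^ (-(1 / 2) : ℝ) *
        (-(1 / 4) * (∑ α, ∑ β, ∑ ξ, ∑ η, (f α β * f ξ η * G α ξ * v.2.2 β η
            + G β η * (f α β * f ξ η * v.2.2 α ξ + G α ξ * (f α β * v.1 ξ η + f ξ η * v.1 α β))))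
         + (1 / 2) * m ^ 2 * (∑ α, ∑ β, (a α * a β * v.2.2 α β + G α β * (a α * v.2.1 β + a β * v.2.1 α)))) := by
  have hdetpos : (0:ℝ) < -G.det := by linarith
  have hF : ∀ i j : Fin 4, HasFDerivAt (fun x : X4 => x.1 i j) (Fc i j) (f, a, G) :=
    fun i j => (Fc i j).hasFDerivAt
  have hA : ∀ i : Fin 4, HasFDerivAt (fun x : X4 => x.2.1 i) (Ac i) (f, a, G) :=
    fun i => (Ac i).hasFDerivAt
  have hC : ∀ i j : Fin 4, HasFDerivAt (fun x : X4 => x.2.2 i j) (Cc i j) (f, a, G) :=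
    fun i j => (Cc i j).hasFDerivAt
  have hS : HasFDerivAt (fun x : X4 => ∑ α, ∑ β, ∑ ξ, ∑ η, x.1 α β * x.1 ξ η * x.2.2 α ξ * x.2.2 β η)
      (∑ α, ∑ β, ∑ ξ, ∑ η, ((f α β * f ξ η * G α ξ) • Cc β η +
        G β η • ((f α β * f ξ η) • Cc α ξ + G α ξ • (f α β • Fc ξ η + f ξ η • Fc α β)))) (f, a, G) := by
    refine HasFDerivAt.fun_sum fun α _ => HasFDerivAt.fun_sum fun β _ => HasFDerivAt.fun_sum fun ξ _ =>
      HasFDerivAt.fun_sum fun η _ => ?_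
    exact (((hF α β).mul (hF ξ η)).mul (hC α ξ)).mul (hC β η)
  have hT : HasFDerivAt (fun x : X4 => ∑ α, ∑ β, x.2.1 α * x.2.1 β * x.2.2 α β)
      (∑ α, ∑ β, ((a α * a β) • Cc α β + G α β • (a α • Ac β + a β • Ac α))) (f, a, G) := by
    refine HasFDerivAt.fun_sum fun α _ => HasFDerivAt.fun_sum fun β _ => ?_
    exact ((hA α).mul (hA β)).mul (hC α β)
  have hdg : HasFDerivAt (fun x : X4 => x.2.2) DGc (f, a, G) := DGc.hasFDerivAt
  have hdet4 : HasFDerivAt (fun x : X4 => x.2.2.det) ((Ddet G).comp DGc) (f, a, G) :=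
    (hasFDerivAt_det4 G).comp (f, a, G) hdg
  have hrpow : HasDerivAt (fun t : ℝ => t ^ ((-(1/2)) : ℝ))
      ((-(1/2)) * (-G.det) ^ ((-(1/2) : ℝ) - 1)) (-G.det) :=
    Real.hasDerivAt_rpow_const (Or.inl (ne_of_gt hdetpos))
  have hQ : HasFDerivAt (fun x : X4 => (-x.2.2.det) ^ ((-(1/2)) : ℝ))
      (((-(1/2)) * (-G.det) ^ ((-(1/2) : ℝ) - 1)) • (-((Ddet G).comp DGc))) (f, a, G) :=
    by have := hrpow.comp_hasFDerivAt (f, a, G) hdet4.fun_neg; exact this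
  have hLd : HasFDerivAt (fun x : X4 =>
      (-(1 / 4) * ∑ α, ∑ β, ∑ ξ, ∑ η, x.1 α β * x.1 ξ η * x.2.2 α ξ * x.2.2 β η
        + (1 / 2) * m ^ 2 * ∑ α, ∑ β, x.2.1 α * x.2.1 β * x.2.2 α β)
      * (-x.2.2.det) ^ (-(1 / 2) : ℝ)) _ (f, a, G) :=
    ((hS.const_mul (-(1 / 4))).fun_add (hT.const_mul ((1 / 2) * m ^ 2))).mul hQ
  intro v
  rw [hLd.fderiv]
  rfl

theorem proca_evalF (hdet : G.det < 0) (ρ σ : Fin 4) : fderiv ℝ (fun x : X4 =>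
      (-(1 / 4) * ∑ α, ∑ β, ∑ ξ, ∑ η, x.1 α β * x.1 ξ η * x.2.2 α ξ * x.2.2 β η
        + (1 / 2) * m ^ 2 * ∑ α, ∑ β, x.2.1 α * x.2.1 β * x.2.2 α β)
      * (-x.2.2.det) ^ (-(1 / 2) : ℝ)) (f, a, G) (Matrix.single ρ σ 1, 0, 0) =
    (-G.det) ^ (-(1 / 2) : ℝ) * (-(1 / 4) *
      ((∑ α, ∑ β, f α β * G α ρ * G β σ) + (∑ ξ, ∑ η, f ξ η * G ρ ξ * G σ η))) := by
  rw [proca_heval f G a m hdet]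
  simp only [Matrix.zero_apply, Pi.zero_apply, map_zero, mul_zero, zero_mul, add_zero, zero_add,
    neg_zero, Finset.sum_const_zero, Matrix.single, Matrix.of_apply, ite_and, mul_ite,
    ite_mul, mul_one, one_mul, Finset.sum_ite_irrel, Finset.sum_ite_eq, Finset.mem_univ, if_true,
    mul_add, Finset.sum_add_distrib]
  congr 1 <;> congr 2 <;>
    exact Finset.sum_congr rfl fun i _ => Finset.sum_congr rfl fun j _ => by ring

theorem proca_evalA (hdet : G.det < 0) (ρ : Fin 4) : fderiv ℝ (fun x : X4 =>
      (-(1 / 4) * ∑ α, ∑ β, ∑ ξ, ∑ η, x.1 α β * x.1 ξ η * x.2.2 α ξ * x.2.2 β η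
        + (1 / 2) * m ^ 2 * ∑ α, ∑ β, x.2.1 α * x.2.1 β * x.2.2 α β)
      * (-x.2.2.det) ^ (-(1 / 2) : ℝ)) (f, a, G) (0, Pi.single ρ 1, 0) =
    (-G.det) ^ (-(1 / 2) : ℝ) * ((1 / 2) * m ^ 2 *
      ((∑ α, a α * G α ρ) + (∑ β, a β * G ρ β))) := by
  rw [proca_heval f G a m hdet]
  simp only [Matrix.zero_apply, Pi.zero_apply, map_zero, mul_zero, zero_mul, add_zero, zero_add,
    neg_zero, Finset.sum_const_zero, Pi.single_apply, mul_ite, ite_mul, mul_one, one_mul,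
    Finset.sum_ite_irrel, Finset.sum_ite_eq, Finset.sum_ite_eq', Finset.mem_univ, if_true,
    mul_add, Finset.sum_add_distrib]
  congr 1 <;> congr 2 <;>
    first
    | exact Finset.sum_congr rfl fun i _ => by ring
    | exact Finset.sum_congr rfl fun i _ => Finset.sum_congr rfl fun j _ => by ring

theorem proca_evalG (hdet : G.det < 0) (ρ σ : Fin 4) : fderiv ℝ (fun x : X4 =>
      (-(1 / 4) * ∑ α, ∑ β, ∑ ξ, ∑ η, x.1 α β * x.1 ξ η * x.2.2 α ξ * x.2.2 β η
        + (1 / 2) * m ^ 2 * ∑ α, ∑ β, x.2.1 α * x.2.1 β * x.2.2 α β)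
      * (-x.2.2.det) ^ (-(1 / 2) : ℝ)) (f, a, G) (0, 0, Matrix.single ρ σ 1) =
      (-(1 / 4) * ∑ α, ∑ β, ∑ ξ, ∑ η, f α β * f ξ η * G α ξ * G β η
        + (1 / 2) * m ^ 2 * ∑ α, ∑ β, a α * a β * G α β)
      * ((1 / 2) * (-G.det) ^ ((-(1 / 2) : ℝ) - 1) * G.adjugate σ ρ)
      + (-G.det) ^ (-(1 / 2) : ℝ) *
        (-(1 / 4) * ((∑ α, ∑ ξ, f α ρ * f ξ σ * G α ξ) + (∑ β, ∑ η, f ρ β * f σ η * G β η))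
         + (1 / 2) * m ^ 2 * (a ρ * a σ)) := by
  rw [proca_heval f G a m hdet]
  simp only [detDeriv_std]
  simp only [Matrix.zero_apply, Pi.zero_apply, map_zero, mul_zero, zero_mul,
    add_zero, zero_add, neg_zero, Finset.sum_const_zero, Matrix.single, Matrix.of_apply,
    ite_and, mul_ite, ite_mul, mul_one, one_mul, Finset.sum_ite_irrel, Finset.sum_ite_eq,
    Finset.sum_ite_eq', Finset.mem_univ, if_true, mul_add, Finset.sum_add_distrib]
  congr 1
  · ring
  congr 1
  congr 1
  congr 2
  exact Finset.sum_congr rfl fun i _ => Finset.sum_congr rfl fun j _ => by ring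

end aux

section gym
variable (f G : Matrix (Fin 4) (Fin 4) ℝ) (a : Fin 4 → ℝ) (m : ℝ) (μ ν : Fin 4)

theorem sum_mul_collapse (c d : ℝ) (t : Fin 4 → Fin 4 → Fin 4 → ℝ) (u : Fin 4 → ℝ) :
    ∑ x, c * (d * ∑ i, ∑ j, t x i j) * u x = ∑ x, ∑ i, ∑ j, c * d * t x i j * u x := by
  refine Finset.sum_congr rfl fun x _ => ?_
  simp only [Finset.mul_sum, Finset.sum_mul]
  exact Finset.sum_congr rfl fun i _ => Finset.sum_congr rfl fun j _ => by ring

theorem sum3_rot (g : Fin 4 → Fin 4 → Fin 4 → ℝ) :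
    ∑ x, ∑ i, ∑ j, g x i j = ∑ i, ∑ j, ∑ x, g x i j := by
  rw [Finset.sum_comm]
  exact Finset.sum_congr rfl fun i _ => Finset.sum_comm

theorem sum3_swap13 (g : Fin 4 → Fin 4 → Fin 4 → ℝ) :
    ∑ x, ∑ i, ∑ j, g x i j = ∑ j, ∑ i, ∑ x, g x i j := by
  rw [sum3_rot g, Finset.sum_comm]

theorem pairA (c : ℝ) :
    ∑ x, c * (-(1 / 4) * ∑ β, ∑ η, f ν β * f x η * G β η) * G μ x
      = ∑ x, c * (-(1 / 4) * ∑ ξ, ∑ η, f ξ η * G μ ξ * G x η) * f ν x := by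
  rw [sum_mul_collapse c (-(1 / 4)) (fun x i j => f ν i * f x j * G i j) (fun x => G μ x),
    sum_mul_collapse c (-(1 / 4)) (fun x i j => f i j * G μ i * G x j) (fun x => f ν x),
    Finset.sum_comm]
  exact Finset.sum_congr rfl fun i _ => Finset.sum_congr rfl fun x _ =>
    Finset.sum_congr rfl fun j _ => by ring

theorem pairB (hGs : ∀ i j, G i j = G j i) (c : ℝ) :
    ∑ x, c * (-(1 / 4) * ∑ α, ∑ ξ, f α ν * f ξ x * G α ξ) * G μ x
      = ∑ x, c * (-(1 / 4) * ∑ α, ∑ β, f α β * G α x * G β μ) * f x ν := by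
  rw [sum_mul_collapse c (-(1 / 4)) (fun x i j => f i ν * f j x * G i j) (fun x => G μ x),
    sum_mul_collapse c (-(1 / 4)) (fun x i j => f i j * G i x * G j μ) (fun x => f x ν),
    sum3_rot (fun x i j => c * -(1 / 4) * (f i ν * f j x * G i j) * G μ x)]
  refine Finset.sum_congr rfl fun p _ => Finset.sum_congr rfl fun q _ =>
    Finset.sum_congr rfl fun s _ => ?_
  rw [hGs p q, hGs μ s]
  ring

theorem pairC (c : ℝ) :
    ∑ x, c * (-(1 / 4) * ∑ β, ∑ η, f x β * f ν η * G β η) * G x μ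
      = ∑ x, c * (-(1 / 4) * ∑ α, ∑ β, f α β * G α μ * G β x) * f ν x := by
  rw [sum_mul_collapse c (-(1 / 4)) (fun x i j => f x i * f ν j * G i j) (fun x => G x μ),
    sum_mul_collapse c (-(1 / 4)) (fun x i j => f i j * G i μ * G j x) (fun x => f ν x),
    sum3_rot (fun x i j => c * -(1 / 4) * (f i j * G i μ * G j x) * f ν x)]
  exact Finset.sum_congr rfl fun p _ => Finset.sum_congr rfl fun q _ =>
    Finset.sum_congr rfl fun s _ => by ring

theorem pairD (hGs : ∀ i j, G i j = G j i) (c : ℝ) :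
    ∑ x, c * (-(1 / 4) * ∑ α, ∑ ξ, f α x * f ξ ν * G α ξ) * G x μ
      = ∑ x, c * (-(1 / 4) * ∑ ξ, ∑ η, f ξ η * G x ξ * G μ η) * f x ν := by
  rw [sum_mul_collapse c (-(1 / 4)) (fun x i j => f i x * f j ν * G i j) (fun x => G x μ),
    sum_mul_collapse c (-(1 / 4)) (fun x i j => f i j * G x i * G μ j) (fun x => f x ν),
    sum3_swap13 (fun x i j => c * -(1 / 4) * (f i x * f j ν * G i j) * G x μ)]
  refine Finset.sum_congr rfl fun p _ => Finset.sum_congr rfl fun q _ =>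
    Finset.sum_congr rfl fun s _ => ?_
  rw [hGs q p, hGs s μ]
  ring

theorem pairM1 (c : ℝ) :
    ∑ x, c * (1 / 2 * m ^ 2 * (a ν * a x)) * G μ x
      = c * (1 / 2 * m ^ 2 * ∑ β, a β * G μ β) * a ν := by
  rw [show c * (1 / 2 * m ^ 2 * ∑ β, a β * G μ β) * a ν
      = ∑ β, c * (1 / 2 * m ^ 2 * (a ν * a β)) * G μ β from by
    rw [Finset.mul_sum, Finset.mul_sum, Finset.sum_mul]
    exact Finset.sum_congr rfl fun β _ => by ring]

theorem pairM2 (c : ℝ) :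
    ∑ x, c * (1 / 2 * m ^ 2 * (a x * a ν)) * G x μ
      = c * (1 / 2 * m ^ 2 * ∑ α, a α * G α μ) * a ν := by
  rw [show c * (1 / 2 * m ^ 2 * ∑ α, a α * G α μ) * a ν
      = ∑ α, c * (1 / 2 * m ^ 2 * (a α * a ν)) * G α μ from by
    rw [Finset.mul_sum, Finset.mul_sum, Finset.sum_mul]
    exact Finset.sum_congr rfl fun β _ => by ring]

theorem hadjL (c K : ℝ) :
    ∑ x, c * (1 / 2 * K * G.adjugate x ν) * G μ x
      = c * (1 / 2 * K) * (G.det * if μ = ν then 1 else 0) := by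
  rw [show c * (1 / 2 * K) * (G.det * if μ = ν then 1 else 0)
      = c * (1 / 2 * K) * ∑ x, G μ x * G.adjugate x ν from by
    rw [← Matrix.mul_apply, Matrix.mul_adjugate, Matrix.smul_apply, Matrix.one_apply,
      smul_eq_mul]]
  rw [Finset.mul_sum]
  exact Finset.sum_congr rfl fun x _ => by ring

theorem hadjR (c K : ℝ) :
    ∑ x, c * (1 / 2 * K * G.adjugate ν x) * G x μ
      = c * (1 / 2 * K) * (G.det * if μ = ν then 1 else 0) := by
  rw [show c * (1 / 2 * K) * (G.det * if μ = ν then 1 else 0)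
      = c * (1 / 2 * K) * ∑ x, G.adjugate ν x * G x μ from by
    rw [← Matrix.mul_apply, Matrix.adjugate_mul, Matrix.smul_apply, Matrix.one_apply,
      smul_eq_mul, show (if ν = μ then (1:ℝ) else 0) = if μ = ν then 1 else 0 from by
        by_cases h : μ = ν <;> simp [h, eq_comm]]]
  rw [Finset.mul_sum]
  exact Finset.sum_congr rfl fun x _ => by ring

end gym

/-- the relation (Eq. (14)) between the metric and the canonical
energy-momentum tensor densities of the Proca system; they do not coincide. -/
theorem proca_emt_relation
    (f G : Matrix (Fin 4) (Fin 4) ℝ) (hG : G.IsSymm) (hdet : G.det < 0)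
    (a : Fin 4 → ℝ) (m : ℝ)
    (L : Matrix (Fin 4) (Fin 4) ℝ × (Fin 4 → ℝ) × Matrix (Fin 4) (Fin 4) ℝ → ℝ)
    (hL : L = fun x =>
      (-(1 / 4) * ∑ α, ∑ β, ∑ ξ, ∑ η, x.1 α β * x.1 ξ η * x.2.2 α ξ * x.2.2 β η
        + (1 / 2) * m ^ 2 * ∑ α, ∑ β, x.2.1 α * x.2.1 β * x.2.2 α β)
      * (-x.2.2.det) ^ (-(1 / 2) : ℝ))
    (Tmet θcan : Fin 4 → Fin 4 → ℝ)
    (hT : Tmet = fun μ ν =>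
      (∑ β, fderiv ℝ L (f, a, G) (0, 0, Matrix.single ν β 1) * G μ β)
      + (∑ β, fderiv ℝ L (f, a, G) (0, 0, Matrix.single β ν 1) * G β μ))
    (hθ : θcan = fun μ ν =>
      (∑ β, fderiv ℝ L (f, a, G) (Matrix.single β μ 1, 0, 0) * f β ν)
      - (if μ = ν then L (f, a, G) else 0)) :
    ∀ μ ν : Fin 4,
      Tmet μ ν = θcan μ ν
        + (∑ β, fderiv ℝ L (f, a, G) (Matrix.single μ β 1, 0, 0) * f ν β)
        + fderiv ℝ L (f, a, G) (0, Pi.single μ 1, 0) * a ν := by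
  subst hL; subst hT; subst hθ
  intro μ ν
  simp only [proca_evalF f G a m hdet, proca_evalA f G a m hdet, proca_evalG f G a m hdet]
  simp only [mul_add, add_mul, Finset.sum_add_distrib]
  have hGs : ∀ i j, G i j = G j i := fun i j => hG.apply j i
  have hpos : (0:ℝ) < -G.det := by linarith
  have hK : (-G.det) ^ ((-(1 / 2) : ℝ) - 1) * G.det = -(-G.det) ^ (-(1 / 2) : ℝ) := by
    have h := Real.rpow_add_one (ne_of_gt hpos) (-(1 / 2) - 1)
    rw [show (-(1 / 2) : ℝ) - 1 + 1 = -(1 / 2) by ring] at h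
    rw [h]; ring
  have hite : (if μ = ν then
        (-(1 / 4) * ∑ α, ∑ β, ∑ ξ, ∑ η, f α β * f ξ η * G α ξ * G β η)
          * (-G.det) ^ (-(1 / 2) : ℝ)
        + (1 / 2 * m ^ 2 * ∑ α, ∑ β, a α * a β * G α β) * (-G.det) ^ (-(1 / 2) : ℝ)
      else 0)
      = ((-(1 / 4) * ∑ α, ∑ β, ∑ ξ, ∑ η, f α β * f ξ η * G α ξ * G β η)
          * (-G.det) ^ (-(1 / 2) : ℝ)
        + (1 / 2 * m ^ 2 * ∑ α, ∑ β, a α * a β * G α β) * (-G.det) ^ (-(1 / 2) : ℝ))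
        * (if μ = ν then 1 else 0) := by
    by_cases h : μ = ν <;> simp [h]
  linear_combination (norm := ring1)
    hadjL G μ ν (-(1 / 4) * ∑ α, ∑ β, ∑ ξ, ∑ η, f α β * f ξ η * G α ξ * G β η)
      ((-G.det) ^ ((-(1 / 2) : ℝ) - 1))
    + hadjL G μ ν (1 / 2 * m ^ 2 * ∑ α, ∑ β, a α * a β * G α β)
      ((-G.det) ^ ((-(1 / 2) : ℝ) - 1))
    + hadjR G μ ν (-(1 / 4) * ∑ α, ∑ β, ∑ ξ, ∑ η, f α β * f ξ η * G α ξ * G β η)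
      ((-G.det) ^ ((-(1 / 2) : ℝ) - 1))
    + hadjR G μ ν (1 / 2 * m ^ 2 * ∑ α, ∑ β, a α * a β * G α β)
      ((-G.det) ^ ((-(1 / 2) : ℝ) - 1))
    + pairB f G μ ν hGs ((-G.det) ^ (-(1 / 2) : ℝ))
    + pairA f G μ ν ((-G.det) ^ (-(1 / 2) : ℝ))
    + pairM1 G a m μ ν ((-G.det) ^ (-(1 / 2) : ℝ))
    + pairD f G μ ν hGs ((-G.det) ^ (-(1 / 2) : ℝ))
    + pairC f G μ ν ((-G.det) ^ (-(1 / 2) : ℝ))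
    + pairM2 G a m μ ν ((-G.det) ^ (-(1 / 2) : ℝ))
    + hite
    + ((-(1 / 4) * ∑ α, ∑ β, ∑ ξ, ∑ η, f α β * f ξ η * G α ξ * G β η
        + 1 / 2 * m ^ 2 * ∑ α, ∑ β, a α * a β * G α β)
        * (if μ = ν then (1:ℝ) else 0)) * hK
end

section
/- Let m, M : ℝ with M ≠ 0, let ψ, ψ̄ : Fin 4 → ℂ (spinor and adjoint spinor), P, P̄ : Fin 4 → Fin 4 → ℂ (the arrays P c μ = ∂ψ^c/∂x^μ and P̄ a μ = ∂ψ̄_a/∂x^μ, treated as independent variables), and γ : Fin 4 → Matrix (Fin 4) (Fin 4) ℂ (the Dirac matrices, (γ^α)_{a c} = γ α a c). Define σ α β a c = (I/2) ∑_{e} (γ α a e · γ β e c − γ β a e · γ α e c) and the regularized Dirac Lagrangian L(ψ, ψ̄, P, P̄, γ) = (I/2) ∑_{a,c,α} ( ψ̄ a · γ α a c · P c α − P̄ a α · γ α a c · ψ c ) − m ∑_{a} ψ̄ a · ψ a + (I/(3M)) ∑_{a,c,α,β} P̄ a α · σ α β a c · P c β. Then for all μ, ν ∈ Fin 4: ∑_{c}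 (∂L/∂P_{(c,μ)}) · P c ν + ∑_{a} P̄ a ν · (∂L/∂P̄_{(a,μ)}) − ∑_{a,c} (∂L/∂γ_{(ν,a,c)}) · γ μ a c = 0, where all partial derivatives are complex Fréchet partial derivatives at (ψ, ψ̄, P, P̄, γ), and the derivative with respect to γ takes into account the dependence of σ on γ. -/
attribute [local instance] Matrix.normedAddCommGroup Matrix.normedSpace

open Complex Finset

private lemma atomD (p q : ℂ) : HasDerivAt (fun t : ℂ => p + t * q) q 0 :=
  (hasDerivAt_mul_const q).const_add p

private lemma sum_mk5 {ι A B C D E : Type*} [AddCommMonoid A] [AddCommMonoid B]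
    [AddCommMonoid C] [AddCommMonoid D] [AddCommMonoid E]
    (s : Finset ι) (f1 : ι → A) (f2 : ι → B) (f3 : ι → C) (f4 : ι → D) (f5 : ι → E) :
    (∑ i ∈ s, ((f1 i, f2 i, f3 i, f4 i, f5 i) : A × B × C × D × E))
      = (∑ i ∈ s, f1 i, ∑ i ∈ s, f2 i, ∑ i ∈ s, f3 i, ∑ i ∈ s, f4 i, ∑ i ∈ s, f5 i) := by
  induction s using Finset.cons_induction with
  | empty => simp; rfl
  | cons a s ha ih => simp [ih, Prod.mk_add_mk]

private lemma sum_ite_irrel'' {ι : Type*} {p : Prop} [Decidable p] (s : Finset ι) (f : ι → ℂ) :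
    (∑ x ∈ s, if p then f x else 0) = if p then ∑ x ∈ s, f x else 0 := by
  split_ifs <;> simp

private lemma fderivVal (m M : ℝ) (ψ ψbar : Fin 4 → ℂ) (P Pbar Q Qb : Fin 4 → Fin 4 → ℂ)
    (γ G : Fin 4 → Matrix (Fin 4) (Fin 4) ℂ)
    (L : (Fin 4 → ℂ) × (Fin 4 → ℂ) × (Fin 4 → Fin 4 → ℂ) × (Fin 4 → Fin 4 → ℂ)
          × (Fin 4 → Matrix (Fin 4) (Fin 4) ℂ) → ℂ)
    (hL : L = fun x =>
      (I / 2) * (∑ a, ∑ c, ∑ α,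
          (x.2.1 a * x.2.2.2.2 α a c * x.2.2.1 c α
            - x.2.2.2.1 a α * x.2.2.2.2 α a c * x.1 c))
      - (m : ℂ) * ∑ a, x.2.1 a * x.1 a
      + (I / (3 * (M : ℂ))) * ∑ a, ∑ c, ∑ α, ∑ β,
          x.2.2.2.1 a α
            * ((I / 2) * ∑ e, (x.2.2.2.2 α a e * x.2.2.2.2 β e c
                - x.2.2.2.2 β a e * x.2.2.2.2 α e c))
            * x.2.2.1 c β) :
    fderiv ℂ L (ψ, ψbar, P, Pbar, γ) (0, 0, Q, Qb, G)
      = (I / 2) * (∑ a, ∑ c, ∑ α,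
          (ψbar a * G α a c * P c α + ψbar a * γ α a c * Q c α
            - (Qb a α * γ α a c + Pbar a α * G α a c) * ψ c))
        + (I / (3 * (M : ℂ))) * ∑ a, ∑ c, ∑ α, ∑ β,
          ((Qb a α * ((I / 2) * ∑ e, (γ α a e * γ β e c - γ β a e * γ α e c))
              + Pbar a α * ((I / 2) * ∑ e, ((G α a e * γ β e c + γ α a e * G β e c)
                  - (G β a e * γ α e c + γ β a e * G α e c)))) * P c β
            + Pbar a α * ((I / 2) * ∑ e, (γ α a e * γ β e c - γ β a e * γ α e c)) * Q c β) := by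
  have hdiff : DifferentiableAt ℂ L (ψ, ψbar, P, Pbar, γ) := by subst hL; fun_prop
  set x : (Fin 4 → ℂ) × (Fin 4 → ℂ) × (Fin 4 → Fin 4 → ℂ) × (Fin 4 → Fin 4 → ℂ)
          × (Fin 4 → Matrix (Fin 4) (Fin 4) ℂ) := (ψ, ψbar, P, Pbar, γ) with hx
  set v : (Fin 4 → ℂ) × (Fin 4 → ℂ) × (Fin 4 → Fin 4 → ℂ) × (Fin 4 → Fin 4 → ℂ)
          × (Fin 4 → Matrix (Fin 4) (Fin 4) ℂ) := (0, 0, Q, Qb, G) with hv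
  have hcurve := ((hasDerivAt_id (0:ℂ)).smul_const v).const_add x
  have hchain : HasDerivAt (fun t : ℂ => L (x + t • v)) (fderiv ℂ L x (0, 0, Q, Qb, G)) 0 := by
    have := hdiff.hasFDerivAt.comp_hasDerivAt_of_eq 0 hcurve (by simp)
    rw [one_smul] at this
    exact this
  have hfun : (fun t : ℂ => L (x + t • v)) = (fun t : ℂ =>
      (I / 2) * (∑ a, ∑ c, ∑ α,
          (ψbar a * (γ α a c + t * G α a c) * (P c α + t * Q c α)
            - (Pbar a α + t * Qb a α) * (γ α a c + t * G α a c) * ψ c))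
      - (m : ℂ) * ∑ a, ψbar a * ψ a
      + (I / (3 * (M : ℂ))) * ∑ a, ∑ c, ∑ α, ∑ β,
          (Pbar a α + t * Qb a α)
            * ((I / 2) * ∑ e, ((γ α a e + t * G α a e) * (γ β e c + t * G β e c)
                - (γ β a e + t * G β a e) * (γ α e c + t * G α e c)))
            * (P c β + t * Q c β)) := by
    funext t
    rw [hL, hx, hv]
    simp [Prod.smul_mk, Prod.mk_add_mk, Matrix.add_apply, Matrix.smul_apply, smul_eq_mul]
  rw [hfun] at hchain
  refine hchain.unique ?_
  refine HasDerivAt.congr_deriv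
    (HasDerivAt.add
      (HasDerivAt.sub
        (HasDerivAt.const_mul _ (HasDerivAt.fun_sum fun a _ => HasDerivAt.fun_sum fun c _ =>
          HasDerivAt.fun_sum fun α _ =>
            HasDerivAt.sub
              (((hasDerivAt_const _ _).mul (atomD _ _)).mul (atomD _ _))
              (((atomD _ _).mul (atomD _ _)).mul (hasDerivAt_const _ _))))
        (hasDerivAt_const _ _))
      (HasDerivAt.const_mul _ (HasDerivAt.fun_sum fun a _ => HasDerivAt.fun_sum fun c _ =>
        HasDerivAt.fun_sum fun α _ => HasDerivAt.fun_sum fun β _ =>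
          ((atomD _ _).mul (HasDerivAt.const_mul _ (HasDerivAt.fun_sum fun e _ =>
            ((atomD _ _).mul (atomD _ _)).sub ((atomD _ _).mul (atomD _ _))))).mul
            (atomD _ _)))) ?_
  simp only [Pi.mul_apply, Pi.sub_apply, zero_mul, mul_zero, add_zero, zero_add, sub_zero]


open Complex in
/-- the identity (Eq. (16)) for the space-time (metric) index class of
the regularized Dirac Lagrangian, with the spinor indices fully contracted; the
derivative with respect to the Dirac matrices `γ` accounts for the dependence of
`σ^{αβ} = (i/2)[γ^α, γ^β]` on `γ`. -/
theorem dirac_metric_index_identity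
    (m M : ℝ) (hM : M ≠ 0)
    (ψ ψbar : Fin 4 → ℂ) (P Pbar : Fin 4 → Fin 4 → ℂ)
    (γ : Fin 4 → Matrix (Fin 4) (Fin 4) ℂ)
    (L : (Fin 4 → ℂ) × (Fin 4 → ℂ) × (Fin 4 → Fin 4 → ℂ) × (Fin 4 → Fin 4 → ℂ)
          × (Fin 4 → Matrix (Fin 4) (Fin 4) ℂ) → ℂ)
    (hL : L = fun x =>
      (I / 2) * (∑ a, ∑ c, ∑ α,
          (x.2.1 a * x.2.2.2.2 α a c * x.2.2.1 c α
            - x.2.2.2.1 a α * x.2.2.2.2 α a c * x.1 c))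
      - (m : ℂ) * ∑ a, x.2.1 a * x.1 a
      + (I / (3 * (M : ℂ))) * ∑ a, ∑ c, ∑ α, ∑ β,
          x.2.2.2.1 a α
            * ((I / 2) * ∑ e, (x.2.2.2.2 α a e * x.2.2.2.2 β e c
                - x.2.2.2.2 β a e * x.2.2.2.2 α e c))
            * x.2.2.1 c β) :
    ∀ μ ν : Fin 4,
      (∑ c, fderiv ℂ L (ψ, ψbar, P, Pbar, γ)
          (0, 0, (fun c' μ' => if c' = c ∧ μ' = μ then 1 else 0), 0, 0) * P c ν)
      + (∑ a, Pbar a ν * fderiv ℂ L (ψ, ψbar, P, Pbar, γ)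
          (0, 0, 0, (fun a' μ' => if a' = a ∧ μ' = μ then 1 else 0), 0))
      - (∑ a, ∑ c, fderiv ℂ L (ψ, ψbar, P, Pbar, γ)
          (0, 0, 0, 0, Pi.single ν (Matrix.single a c 1)) * γ μ a c)
      = 0 := by
  intro μ ν
  set F := fderiv ℂ L (ψ, ψbar, P, Pbar, γ) with hF
  set Qa : Fin 4 → Fin 4 → ℂ := fun c' μ' => if μ' = μ then P c' ν else 0 with hQa
  set Qbb : Fin 4 → Fin 4 → ℂ := fun a' μ' => if μ' = μ then Pbar a' ν else 0 with hQbb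
  set Gneg : Fin 4 → Matrix (Fin 4) (Fin 4) ℂ :=
    fun α => Matrix.of fun a' c' => if α = ν then -(γ μ a' c') else 0 with hGneg
  -- Term A
  have eA : (∑ c, F (0, 0, (fun c' μ' => if c' = c ∧ μ' = μ then 1 else 0), 0, 0) * P c ν)
      = F ((0 : Fin 4 → ℂ), (0 : Fin 4 → ℂ), Qa, (0 : Fin 4 → Fin 4 → ℂ),
          (0 : Fin 4 → Matrix (Fin 4) (Fin 4) ℂ)) := by
    have : ((0 : Fin 4 → ℂ), (0 : Fin 4 → ℂ), Qa, (0 : Fin 4 → Fin 4 → ℂ),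
          (0 : Fin 4 → Matrix (Fin 4) (Fin 4) ℂ))
        = ∑ c, P c ν • ((0 : Fin 4 → ℂ), (0 : Fin 4 → ℂ),
            (fun c' μ' => if c' = c ∧ μ' = μ then (1:ℂ) else 0), (0 : Fin 4 → Fin 4 → ℂ),
            (0 : Fin 4 → Matrix (Fin 4) (Fin 4) ℂ)) := by
      simp only [Prod.smul_mk, smul_zero, sum_mk5, Finset.sum_const_zero]
      refine Prod.ext rfl (Prod.ext rfl (Prod.ext ?_ rfl))
      funext c' μ'
      simp [hQa, Finset.sum_apply, Pi.smul_apply, smul_eq_mul, mul_ite, mul_one, mul_zero,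
        ite_and, Finset.sum_ite_eq]
    rw [this, map_sum]
    exact Finset.sum_congr rfl fun c _ => by rw [map_smul, smul_eq_mul, mul_comm]
  -- Term B
  have eB : (∑ a, Pbar a ν * F (0, 0, 0, (fun a' μ' => if a' = a ∧ μ' = μ then 1 else 0), 0))
      = F ((0 : Fin 4 → ℂ), (0 : Fin 4 → ℂ), (0 : Fin 4 → Fin 4 → ℂ), Qbb,
          (0 : Fin 4 → Matrix (Fin 4) (Fin 4) ℂ)) := by
    have : ((0 : Fin 4 → ℂ), (0 : Fin 4 → ℂ), (0 : Fin 4 → Fin 4 → ℂ), Qbb,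
          (0 : Fin 4 → Matrix (Fin 4) (Fin 4) ℂ))
        = ∑ a, Pbar a ν • ((0 : Fin 4 → ℂ), (0 : Fin 4 → ℂ), (0 : Fin 4 → Fin 4 → ℂ),
            (fun a' μ' => if a' = a ∧ μ' = μ then (1:ℂ) else 0),
            (0 : Fin 4 → Matrix (Fin 4) (Fin 4) ℂ)) := by
      simp only [Prod.smul_mk, smul_zero, sum_mk5, Finset.sum_const_zero]
      refine Prod.ext rfl (Prod.ext rfl (Prod.ext rfl (Prod.ext ?_ rfl)))
      funext a' μ'
      simp [hQbb, Finset.sum_apply, Pi.smul_apply, smul_eq_mul, mul_ite, mul_one, mul_zero,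
        ite_and, Finset.sum_ite_eq]
    rw [this, map_sum]
    exact Finset.sum_congr rfl fun a _ => by rw [map_smul, smul_eq_mul]
  -- Term C
  have eC : (∑ a, ∑ c, F (0, 0, 0, 0, Pi.single ν (Matrix.single a c 1)) * γ μ a c)
      = F ((0 : Fin 4 → ℂ), (0 : Fin 4 → ℂ), (0 : Fin 4 → Fin 4 → ℂ), (0 : Fin 4 → Fin 4 → ℂ),
          fun α => Matrix.of fun a' c' => if α = ν then γ μ a' c' else 0) := by
    have : ((0 : Fin 4 → ℂ), (0 : Fin 4 → ℂ), (0 : Fin 4 → Fin 4 → ℂ), (0 : Fin 4 → Fin 4 → ℂ),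
          (fun α => Matrix.of fun a' c' => if α = ν then γ μ a' c' else 0 :
            Fin 4 → Matrix (Fin 4) (Fin 4) ℂ))
        = ∑ a, ∑ c, γ μ a c • ((0 : Fin 4 → ℂ), (0 : Fin 4 → ℂ), (0 : Fin 4 → Fin 4 → ℂ),
            (0 : Fin 4 → Fin 4 → ℂ),
            (Pi.single ν (Matrix.single a c (1:ℂ)) : Fin 4 → Matrix (Fin 4) (Fin 4) ℂ)) := by
      simp only [Prod.smul_mk, smul_zero, sum_mk5, Finset.sum_const_zero]
      refine Prod.ext rfl (Prod.ext rfl (Prod.ext rfl (Prod.ext rfl ?_)))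
      funext α
      by_cases hα : α = ν
      · subst hα
        ext a' c'
        simp [Matrix.sum_apply, Pi.smul_apply, Pi.single_apply, Matrix.smul_apply,
          Matrix.single, mul_ite, mul_one, mul_zero, ite_and, Finset.sum_ite_eq,
          Matrix.of_apply]
      · ext a' c'
        simp [Matrix.sum_apply, Pi.smul_apply, Pi.single_apply, Matrix.smul_apply, hα,
          Matrix.of_apply]
    rw [this]
    rw [map_sum]
    refine Finset.sum_congr rfl fun a _ => ?_
    rw [map_sum]
    exact Finset.sum_congr rfl fun c _ => by rw [map_smul, smul_eq_mul, mul_comm]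
  rw [eA, eB, eC, ← map_add, ← map_sub]
  have ew : (((0 : Fin 4 → ℂ), (0 : Fin 4 → ℂ), Qa, (0 : Fin 4 → Fin 4 → ℂ),
          (0 : Fin 4 → Matrix (Fin 4) (Fin 4) ℂ))
        + ((0 : Fin 4 → ℂ), (0 : Fin 4 → ℂ), (0 : Fin 4 → Fin 4 → ℂ), Qbb,
          (0 : Fin 4 → Matrix (Fin 4) (Fin 4) ℂ))
        - ((0 : Fin 4 → ℂ), (0 : Fin 4 → ℂ), (0 : Fin 4 → Fin 4 → ℂ), (0 : Fin 4 → Fin 4 → ℂ),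
          fun α => Matrix.of fun a' c' => if α = ν then γ μ a' c' else 0))
      = ((0 : Fin 4 → ℂ), (0 : Fin 4 → ℂ), Qa, Qbb, Gneg) := by
    simp only [Prod.mk_add_mk, Prod.mk_sub_mk, add_zero, zero_add, sub_zero, zero_sub]
    refine Prod.ext rfl (Prod.ext rfl (Prod.ext rfl (Prod.ext rfl ?_)))
    funext α
    ext a' c'
    by_cases hα : α = ν <;> simp [hGneg, hα]
  rw [ew, hF, fderivVal m M ψ ψbar P Pbar Qa Qbb γ Gneg L hL]
  -- final algebra
  have h1 : (∑ a, ∑ c, ∑ α,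
      (ψbar a * Gneg α a c * P c α + ψbar a * γ α a c * Qa c α
        - (Qbb a α * γ α a c + Pbar a α * Gneg α a c) * ψ c)) = 0 := by
    refine Finset.sum_eq_zero fun a _ => Finset.sum_eq_zero fun c _ => ?_
    simp only [hQa, hQbb, hGneg, Matrix.of_apply, mul_ite, ite_mul, mul_zero, zero_mul,
      mul_one, mul_neg, neg_mul, add_mul, sub_mul, mul_add, mul_sub,
      Finset.sum_add_distrib, Finset.sum_sub_distrib, sum_ite_irrel'',
      Finset.sum_ite_eq', Finset.mem_univ, if_true, Finset.sum_neg_distrib]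
    ring
  have h2 : (∑ a, ∑ c, ∑ α, ∑ β,
      ((Qbb a α * ((I / 2) * ∑ e, (γ α a e * γ β e c - γ β a e * γ α e c))
          + Pbar a α * ((I / 2) * ∑ e, ((Gneg α a e * γ β e c + γ α a e * Gneg β e c)
              - (Gneg β a e * γ α e c + γ β a e * Gneg α e c)))) * P c β
        + Pbar a α * ((I / 2) * ∑ e, (γ α a e * γ β e c - γ β a e * γ α e c)) * Qa c β)) = 0 := by
    refine Finset.sum_eq_zero fun a _ => Finset.sum_eq_zero fun c _ => ?_
    simp only [hQa, hQbb, hGneg, Matrix.of_apply, mul_ite, ite_mul, mul_zero, zero_mul,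
      mul_one, mul_neg, neg_mul, neg_neg, add_mul, sub_mul, mul_add, mul_sub,
      Finset.sum_add_distrib, Finset.sum_sub_distrib, sum_ite_irrel'',
      Finset.sum_ite_eq', Finset.mem_univ, if_true, Finset.sum_neg_distrib]
    ring
  rw [h1, h2, mul_zero, mul_zero, add_zero]
end

section
/- Let Riem : Fin 4 → Fin 4 → Fin 4 → Fin 4 → ℝ (the components R^η_{ξβλ} of the Riemann-Cartan tensor, treated as an independent tensor argument) and G : Matrix (Fin 4) (Fin 4) ℝ with det G < 0 (the contravariant metric g^{ξλ}). Define Ric ξ λ = ∑_{η} Riem η ξ η λ and the Einstein-Hilbert-Cartan scalar density R̃(Riem, G) = (∑_{ξ,λ} Ric ξ λ · G ξ λ) · (−det G)^{−1/2}. Then for all μ, ν ∈ Fin 4: ∑_{β} (∂R̃/∂G_{(ν,β)}) · G μ β + ∑_{β} (∂R̃/∂G_{(β,ν)}) · G β μ = ( ∑_{β} Ric ν β · G μ β + ∑_{β} Ric β ν · G β μ − (if μ = ν then ∑_{ξ,λ} Ric ξ λ · G ξ λ else 0) ) · (−det G)^{−1/2}, where the partial derivatives are Fréchet partial derivatives in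 the metric slot at (Riem, G). That is, the metric energy-momentum terms of the Einstein-Hilbert-Cartan Lagrangian equal R̃_ν^μ + R̃^μ_ν − δ^μ_ν R̃. -/
attribute [local instance] Matrix.normedAddCommGroup Matrix.normedSpace

lemma det_add_smul_std (G : Matrix (Fin 4) (Fin 4) ℝ) (t : ℝ) (ν β : Fin 4) :
    (G + t • Matrix.single ν β 1).det = G.det + t * G.adjugate β ν := by
  have h : G + t • Matrix.single ν β 1
      = G.updateRow ν (G ν + t • (Pi.single β (1:ℝ) : Fin 4 → ℝ)) := by
    ext i j
    by_cases h : i = ν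
    · simp [Matrix.updateRow_apply, Matrix.single, h, Pi.single_apply, eq_comm]
    · simp [Matrix.updateRow_apply, Matrix.single, h, Ne.symm h]
  rw [h, Matrix.det_updateRow_add, Matrix.det_updateRow_smul, Matrix.updateRow_eq_self,
    ← Matrix.adjugate_apply]

/-- Eq. (18a), the metric derivative terms of the
Einstein-Hilbert-Cartan scalar density equal `R̃_ν^μ + R̃^μ_ν − δ^μ_ν R̃`. -/
theorem ehc_metric_derivative_terms
    (Riem : Fin 4 → Fin 4 → Fin 4 → Fin 4 → ℝ)
    (G : Matrix (Fin 4) (Fin 4) ℝ) (hdet : G.det < 0)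
    (Ric : Fin 4 → Fin 4 → ℝ) (hRic : Ric = fun ξ l => ∑ η, Riem η ξ η l)
    (Rt : (Fin 4 → Fin 4 → Fin 4 → Fin 4 → ℝ) × Matrix (Fin 4) (Fin 4) ℝ → ℝ)
    (hRt : Rt = fun x =>
      (∑ ξ, ∑ l, (∑ η, x.1 η ξ η l) * x.2 ξ l) * (-x.2.det) ^ (-(1 / 2) : ℝ)) :
    ∀ μ ν : Fin 4,
      (∑ β, fderiv ℝ Rt (Riem, G) (0, Matrix.single ν β 1) * G μ β)
      + (∑ β, fderiv ℝ Rt (Riem, G) (0, Matrix.single β ν 1) * G β μ)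
      = ((∑ β, Ric ν β * G μ β) + (∑ β, Ric β ν * G β μ)
          - (if μ = ν then ∑ ξ, ∑ l, Ric ξ l * G ξ l else 0))
        * (-G.det) ^ (-(1 / 2) : ℝ) := by
  intro μ ν
  have h0 : (0:ℝ) < -G.det := by linarith
  have h0' : (-G.det) ≠ 0 := ne_of_gt h0
  set p : ℝ := (-(1/2) : ℝ) with hp
  set S : ℝ := ∑ ξ, ∑ l, Ric ξ l * G ξ l with hS
  set f : ℝ := (-G.det) ^ p with hf
  set k : ℝ := (-G.det) ^ (p - 1) with hk
  have hdiff : DifferentiableAt ℝ Rt (Riem, G) := by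
    rw [hRt]
    apply DifferentiableAt.mul
    · fun_prop
    · apply DifferentiableAt.rpow_const
      · simp only [Matrix.det_apply', Fin.prod_univ_four]
        fun_prop
      · left; simpa using h0'
  have key : ∀ ν' β' : Fin 4,
      fderiv ℝ Rt (Riem, G) (0, Matrix.single ν' β' 1)
        = Ric ν' β' * f + S * G.adjugate β' ν' * ((1/2) * k) := by
    intro ν' β'
    set E : Matrix (Fin 4) (Fin 4) ℝ := Matrix.single ν' β' 1 with hE
    set c : ℝ := G.adjugate β' ν' with hc
    set a : ℝ := Ric ν' β' with ha
    have hcurve : (fun t : ℝ => Rt ((Riem, G) + t • ((0 : Fin 4 → Fin 4 → Fin 4 → Fin 4 → ℝ), E)))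
        = fun t : ℝ => (S + t * a) * (-(G.det + t * c)) ^ p := by
      funext t
      rw [hRt]
      have h2 : ((Riem, G) + t • ((0 : Fin 4 → Fin 4 → Fin 4 → Fin 4 → ℝ), E))
          = (Riem, G + t • E) := by
        simp [Prod.ext_iff]
      rw [h2]
      show (∑ ξ, ∑ l, (∑ η, Riem η ξ η l) * (G + t • E) ξ l) * (-(G + t • E).det) ^ p
          = (S + t * a) * (-(G.det + t * c)) ^ p
      have hEE : (∑ i : Fin 4, ∑ j : Fin 4, Ric i j * E i j) = a := by
        rw [ha, hE]
        simp [Matrix.single, Matrix.of_apply, mul_ite, ite_and, Finset.sum_ite_eq]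
      have hsum : (∑ ξ, ∑ l, (∑ η, Riem η ξ η l) * (G + t • E) ξ l) = S + t * a := by
        have h3 : ∀ ξ l : Fin 4, (∑ η, Riem η ξ η l) * (G + t • E) ξ l
            = Ric ξ l * G ξ l + t * (Ric ξ l * E ξ l) := by
          intro ξ l
          simp only [Matrix.add_apply, Matrix.smul_apply, smul_eq_mul, hRic]
          ring
        simp only [h3, Finset.sum_add_distrib, ← Finset.mul_sum]
        rw [hEE, ← hS]
      rw [hsum, det_add_smul_std, hc]
    have hu : HasDerivAt (fun t : ℝ => S + t * a) a 0 := (hasDerivAt_mul_const a).const_add S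
    have hv0 : HasDerivAt (fun t : ℝ => -(G.det + t * c)) (-c) 0 :=
      ((hasDerivAt_mul_const c).const_add G.det).neg
    have hv : HasDerivAt (fun t : ℝ => (-(G.det + t * c)) ^ p)
        ((-c) * p * (-(G.det + 0 * c)) ^ (p - 1)) 0 := by
      apply hv0.rpow_const
      left
      simpa using h0'
    have hD := hu.mul hv
    have hline : HasLineDerivAt ℝ Rt
        (a * (-(G.det + 0 * c)) ^ p + (S + 0 * a) * ((-c) * p * (-(G.det + 0 * c)) ^ (p - 1)))
        (Riem, G) ((0 : Fin 4 → Fin 4 → Fin 4 → Fin 4 → ℝ), E) := by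
      show HasDerivAt _ _ _
      rw [hcurve]
      exact hD
    have hfd := hdiff.lineDeriv_eq_fderiv (v := ((0 : Fin 4 → Fin 4 → Fin 4 → Fin 4 → ℝ), E))
    rw [show fderiv ℝ Rt (Riem, G) (0, E) = _ from hfd.symm.trans hline.lineDeriv]
    have hz : (-(G.det + 0 * c)) = -G.det := by ring
    rw [hz, ← hf, ← hk, hp]
    ring
  have hA : ∑ β, G μ β * G.adjugate β ν = G.det * (if μ = ν then 1 else 0) := by
    have := congrArg (fun M : Matrix (Fin 4) (Fin 4) ℝ => M μ ν) (Matrix.mul_adjugate G)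
    simpa [Matrix.mul_apply, Matrix.one_apply] using this
  have hB : ∑ β, G.adjugate ν β * G β μ = G.det * (if ν = μ then 1 else 0) := by
    have := congrArg (fun M : Matrix (Fin 4) (Fin 4) ℝ => M ν μ) (Matrix.adjugate_mul G)
    simpa [Matrix.mul_apply, Matrix.one_apply] using this
  have hr : G.det * k = -f := by
    rw [hk, hf]
    have h4 : (-G.det) ^ p = (-G.det) ^ (p - 1) * (-G.det) := by
      rw [← Real.rpow_add_one h0' (p - 1)]
      norm_num
    rw [h4]
    ring
  have e1 : (∑ β, fderiv ℝ Rt (Riem, G) (0, Matrix.single ν β 1) * G μ β)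
      = (∑ β, Ric ν β * G μ β) * f + (S * ((1/2) * k)) * ∑ β, G μ β * G.adjugate β ν := by
    simp only [key]
    rw [Finset.sum_mul, Finset.mul_sum, ← Finset.sum_add_distrib]
    exact Finset.sum_congr rfl fun β _ => by ring
  have e2 : (∑ β, fderiv ℝ Rt (Riem, G) (0, Matrix.single β ν 1) * G β μ)
      = (∑ β, Ric β ν * G β μ) * f + (S * ((1/2) * k)) * ∑ β, G.adjugate ν β * G β μ := by
    simp only [key]
    rw [Finset.sum_mul, Finset.mul_sum, ← Finset.sum_add_distrib]
    exact Finset.sum_congr rfl fun β _ => by ring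
  rw [e1, e2, hA, hB]
  by_cases h : μ = ν
  · subst h
    simp only [eq_self_iff_true, if_true]
    linear_combination S * hr
  · simp only [if_neg h, if_neg (Ne.symm h)]
    ring
end

section
/- Let Riem : Fin 4 → Fin 4 → Fin 4 → Fin 4 → ℝ and G : Matrix (Fin 4) (Fin 4) ℝ with det G < 0, define Ric ξ λ = ∑_{η} Riem η ξ η λ, √ = (−det G)^{−1/2}, and R̃(Riem, G) = (∑_{ξ,λ} Ric ξ λ · G ξ λ) · √. Then for all μ, ν ∈ Fin 4 the following four identities hold, with all partial derivatives Fréchet partial derivatives in the Riemann slot at (Riem, G): (a) ∑_{ξ,β,λ} (∂R̃/∂Riem_{(ν,ξ,β,λ)}) · Riem μ ξ β λ = (∑_{ξ,λ} Riem μ ξ ν λ · G ξ λ) · √; (b) ∑_{η,β,λ} (∂R̃/∂Riem_{(η,μ,β,λ)}) · Riem η ν β λ = (∑_{λ} Ric ν λ · G μ λ) · √; (c) ∑_{η,ξ,λ} (∂R̃/∂Riem_{(η,ξ,μ,λ)}) · Riem η ξ ν λ = (∑_{ξ,λ} Riem μ ξ ν λ · G ξ λ) · √; (d) ∑_{η,ξ,β}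 (∂R̃/∂Riem_{(η,ξ,β,μ)}) · Riem η ξ β ν = (∑_{ξ} Ric ξ ν · G ξ μ) · √. -/
attribute [local instance] Matrix.normedAddCommGroup Matrix.normedSpace


noncomputable abbrev P4 := (Fin 4 → Fin 4 → Fin 4 → Fin 4 → ℝ) × Matrix (Fin 4) (Fin 4) ℝ

noncomputable def e1 (η ξ β l : Fin 4) : P4 →L[ℝ] ℝ :=
  (ContinuousLinearMap.proj (R := ℝ) (φ := fun _ : Fin 4 => ℝ) l).comp <|
  (ContinuousLinearMap.proj (R := ℝ) (φ := fun _ : Fin 4 => Fin 4 → ℝ) β).comp <|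
  (ContinuousLinearMap.proj (R := ℝ) (φ := fun _ : Fin 4 => Fin 4 → Fin 4 → ℝ) ξ).comp <|
  (ContinuousLinearMap.proj (R := ℝ) (φ := fun _ : Fin 4 => Fin 4 → Fin 4 → Fin 4 → ℝ) η).comp <|
  ContinuousLinearMap.fst ℝ _ _

noncomputable def e2 (ξ l : Fin 4) : P4 →L[ℝ] ℝ :=
  (ContinuousLinearMap.proj (R := ℝ) (φ := fun _ : Fin 4 => ℝ) l).comp <|
  (ContinuousLinearMap.proj (R := ℝ) (φ := fun _ : Fin 4 => Fin 4 → ℝ) ξ).comp <|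
  ContinuousLinearMap.snd ℝ (Fin 4 → Fin 4 → Fin 4 → Fin 4 → ℝ) (Fin 4 → Fin 4 → ℝ)

noncomputable def emx (i j : Fin 4) : Matrix (Fin 4) (Fin 4) ℝ →L[ℝ] ℝ :=
  (ContinuousLinearMap.proj (R := ℝ) (φ := fun _ : Fin 4 => ℝ) j).comp <|
  (ContinuousLinearMap.proj (R := ℝ) (φ := fun _ : Fin 4 => Fin 4 → ℝ) i)

lemma det_differentiableAt (M : Matrix (Fin 4) (Fin 4) ℝ) :
    DifferentiableAt ℝ (Matrix.det : Matrix (Fin 4) (Fin 4) ℝ → ℝ) M := by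
  have h : (Matrix.det : Matrix (Fin 4) (Fin 4) ℝ → ℝ) =
      fun A => ∑ σ : Equiv.Perm (Fin 4), (Equiv.Perm.sign σ : ℝ) *
        ∏ i, A (σ i) i := by
    funext A; rw [Matrix.det_apply']
  rw [h]
  apply DifferentiableAt.fun_sum
  intro σ _
  apply DifferentiableAt.const_mul
  exact (HasFDerivAt.finset_prod (u := Finset.univ)
    (g := fun (i : Fin 4) (A : Matrix (Fin 4) (Fin 4) ℝ) => A (σ i) i)
    (g' := fun i => emx (σ i) i) (x := M)
    (fun i _ => (emx (σ i) i).hasFDerivAt)).differentiableAt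

noncomputable def Sder (Riem : Fin 4 → Fin 4 → Fin 4 → Fin 4 → ℝ)
    (G : Matrix (Fin 4) (Fin 4) ℝ) : P4 →L[ℝ] ℝ :=
  ∑ ξ, ∑ l, ∑ η, (Riem η ξ η l • e2 ξ l + G ξ l • e1 η ξ η l)

lemma hasFDerivAt_S (Riem : Fin 4 → Fin 4 → Fin 4 → Fin 4 → ℝ)
    (G : Matrix (Fin 4) (Fin 4) ℝ) :
    HasFDerivAt (fun x : P4 => ∑ ξ, ∑ l, (∑ η, x.1 η ξ η l) * x.2 ξ l)
      (Sder Riem G) (Riem, G) := by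
  have h : (fun x : P4 => ∑ ξ, ∑ l, (∑ η, x.1 η ξ η l) * x.2 ξ l) =
      fun x : P4 => ∑ ξ, ∑ l, ∑ η, x.1 η ξ η l * x.2 ξ l := by
    funext x; simp [Finset.sum_mul]
  rw [h, Sder]
  apply HasFDerivAt.fun_sum; intro ξ _
  apply HasFDerivAt.fun_sum; intro l _
  apply HasFDerivAt.fun_sum; intro η _
  exact ((e1 η ξ η l).hasFDerivAt (x := (Riem, G))).mul
    ((e2 ξ l).hasFDerivAt (x := (Riem, G)))

lemma key_deriv (Riem : Fin 4 → Fin 4 → Fin 4 → Fin 4 → ℝ)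
    (G : Matrix (Fin 4) (Fin 4) ℝ) (hdet : G.det < 0)
    (Rt : P4 → ℝ)
    (hRt : Rt = fun x =>
      (∑ ξ, ∑ l, (∑ η, x.1 η ξ η l) * x.2 ξ l) * (-x.2.det) ^ (-(1 / 2) : ℝ))
    (E : Fin 4 → Fin 4 → Fin 4 → Fin 4 → ℝ) :
    fderiv ℝ Rt (Riem, G) (E, 0)
      = (∑ ξ, ∑ l, (∑ η, E η ξ η l) * G ξ l) * (-G.det) ^ (-(1 / 2) : ℝ) := by
  have hg : DifferentiableAt ℝ
      (fun B : Matrix (Fin 4) (Fin 4) ℝ => (-B.det) ^ (-(1 / 2) : ℝ)) G := by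
    apply DifferentiableAt.rpow_const ((det_differentiableAt G).neg)
    exact Or.inl (neg_pos.mpr hdet).ne'
  have hc : HasFDerivAt (fun x : P4 => (-x.2.det) ^ (-(1 / 2) : ℝ))
      ((fderiv ℝ (fun B : Matrix (Fin 4) (Fin 4) ℝ => (-B.det) ^ (-(1 / 2) : ℝ)) G).comp
        (ContinuousLinearMap.snd ℝ _ _)) (Riem, G) :=
    by have := (hg.hasFDerivAt).comp (Riem, G) (hasFDerivAt_snd (𝕜 := ℝ) (p := ((Riem, G) : P4))); exact this
  have hmul := (hasFDerivAt_S Riem G).fun_mul hc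
  rw [show fderiv ℝ Rt (Riem, G) =
      (∑ ξ, ∑ l, (∑ η, Riem η ξ η l) * G ξ l) •
        ((fderiv ℝ (fun B : Matrix (Fin 4) (Fin 4) ℝ => (-B.det) ^ (-(1 / 2) : ℝ)) G).comp
          (ContinuousLinearMap.snd ℝ (Fin 4 → Fin 4 → Fin 4 → Fin 4 → ℝ)
            (Matrix (Fin 4) (Fin 4) ℝ))) + (-G.det) ^ (-(1 / 2) : ℝ) • Sder Riem G by
    subst hRt; exact hmul.fderiv]
  have hsnd0 : (ContinuousLinearMap.snd ℝ (Fin 4 → Fin 4 → Fin 4 → Fin 4 → ℝ)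
      (Matrix (Fin 4) (Fin 4) ℝ)) ((E, 0) : P4) = 0 := rfl
  simp only [ContinuousLinearMap.add_apply, ContinuousLinearMap.smul_apply,
    ContinuousLinearMap.comp_apply, hsnd0, map_zero, smul_zero, zero_add]
  have hS0 : (Sder Riem G) ((E, 0) : P4) = ∑ ξ, ∑ l, (∑ η, E η ξ η l) * G ξ l := by
    have he1 : ∀ η ξ β l, e1 η ξ β l ((E, 0) : P4) = E η ξ β l := fun _ _ _ _ => rfl
    have he2 : ∀ ξ l, e2 ξ l ((E, 0) : P4) = 0 := fun _ _ => rfl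
    simp only [Sder, ContinuousLinearMap.sum_apply, ContinuousLinearMap.add_apply,
      ContinuousLinearMap.smul_apply, he1, he2, smul_eq_mul, mul_zero, zero_add,
      Finset.sum_mul]
    exact Finset.sum_congr rfl fun ξ _ => Finset.sum_congr rfl fun l _ =>
      Finset.sum_congr rfl fun η _ => by ring
  rw [hS0]
  simp [smul_eq_mul, mul_comm]

/-- Eqs. (18b)–(18e), the contractions of the derivatives of the
Einstein-Hilbert-Cartan scalar density with respect to the Riemann-Cartan tensor,
with one contracted index pair replaced by the open indices `μ, ν`. -/
theorem ehc_riemann_derivative_terms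
    (Riem : Fin 4 → Fin 4 → Fin 4 → Fin 4 → ℝ)
    (G : Matrix (Fin 4) (Fin 4) ℝ) (hdet : G.det < 0)
    (Ric : Fin 4 → Fin 4 → ℝ) (hRic : Ric = fun ξ l => ∑ η, Riem η ξ η l)
    (Rt : (Fin 4 → Fin 4 → Fin 4 → Fin 4 → ℝ) × Matrix (Fin 4) (Fin 4) ℝ → ℝ)
    (hRt : Rt = fun x =>
      (∑ ξ, ∑ l, (∑ η, x.1 η ξ η l) * x.2 ξ l) * (-x.2.det) ^ (-(1 / 2) : ℝ)) :
    ∀ μ ν : Fin 4,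
      ((∑ ξ, ∑ β, ∑ l, fderiv ℝ Rt (Riem, G)
          ((fun a b c d => if a = ν ∧ b = ξ ∧ c = β ∧ d = l then 1 else 0), 0)
          * Riem μ ξ β l)
        = (∑ ξ, ∑ l, Riem μ ξ ν l * G ξ l) * (-G.det) ^ (-(1 / 2) : ℝ)) ∧
      ((∑ η, ∑ β, ∑ l, fderiv ℝ Rt (Riem, G)
          ((fun a b c d => if a = η ∧ b = μ ∧ c = β ∧ d = l then 1 else 0), 0)
          * Riem η ν β l)
        = (∑ l, Ric ν l * G μ l) * (-G.det) ^ (-(1 / 2) : ℝ)) ∧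
      ((∑ η, ∑ ξ, ∑ l, fderiv ℝ Rt (Riem, G)
          ((fun a b c d => if a = η ∧ b = ξ ∧ c = μ ∧ d = l then 1 else 0), 0)
          * Riem η ξ ν l)
        = (∑ ξ, ∑ l, Riem μ ξ ν l * G ξ l) * (-G.det) ^ (-(1 / 2) : ℝ)) ∧
      ((∑ η, ∑ ξ, ∑ β, fderiv ℝ Rt (Riem, G)
          ((fun a b c d => if a = η ∧ b = ξ ∧ c = β ∧ d = μ then 1 else 0), 0)
          * Riem η ξ β ν)
        = (∑ ξ, Ric ξ ν * G ξ μ) * (-G.det) ^ (-(1 / 2) : ℝ)) := by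
  intro μ ν
  have K := key_deriv Riem G hdet Rt hRt
  subst hRic
  refine ⟨?_, ?_, ?_, ?_⟩ <;>
    simp only [K] <;>
    simp [ite_and, Finset.sum_ite_eq, Finset.sum_ite_eq', Finset.sum_mul, Finset.mul_sum]
  · exact Finset.sum_congr rfl fun _ _ => Finset.sum_congr rfl fun _ _ => by ring
  · conv_lhs => rw [Finset.sum_comm]
    exact Finset.sum_congr rfl fun _ _ => Finset.sum_congr rfl fun _ _ => by ring
  · exact Finset.sum_congr rfl fun _ _ => Finset.sum_congr rfl fun _ _ => by ring
  · conv_lhs => rw [Finset.sum_comm]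
    exact Finset.sum_congr rfl fun _ _ => Finset.sum_congr rfl fun _ _ => by ring
end
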